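/- arXiv:1004.3625 — 7 statements merged into one kernel-verified Lean document; each statement's English description precedes it below -/
import Mathlib

section
/- Let b(x) = Σ_{k≥0} b_k x^k be a power series with nonnegative coefficients converging on [0,1). If there exists c > 0 such that b'(x)/b(x) ≤ c/(1-x) for all 0 ≤ x < 1, then there exists a positive constant K = K(c) such that Σ_{k=0}^N b_k ≥ K · b(e^{-1/N}) for all N ≥ 2c. -/
open Real Filter

/-- Auxiliary: existence of a good integer `m`. -/
lemma exists_good_m (c : ℝ) : ∃ m : ℕ, 1 ≤ m ∧
    Real.exp (-((m : ℝ) - 1)) ≤ ((m : ℝ) ^ (-c)) / 2 := by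
  obtain ⟨a, ha⟩ := Filter.eventually_atTop.mp
    ((tendsto_exp_div_rpow_atTop c).eventually_ge_atTop (2 * Real.exp 1))
  refine ⟨⌈max a 1⌉₊ + 1, le_add_self, ?_⟩
  set m : ℕ := ⌈max a 1⌉₊ + 1 with hm
  have hma : a ≤ (m : ℝ) := by
    calc a ≤ max a 1 := le_max_left _ _
    _ ≤ (⌈max a 1⌉₊ : ℝ) := Nat.le_ceil _
    _ ≤ (m : ℝ) := by push_cast [hm]; linarith
  have hm0 : (0 : ℝ) < m := by positivity
  have hkey : 2 * Real.exp 1 ≤ Real.exp m / (m : ℝ) ^ c := ha _ hma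
  have hmc : (0 : ℝ) < (m : ℝ) ^ c := Real.rpow_pos_of_pos hm0 c
  rw [Real.rpow_neg hm0.le, Real.exp_neg]
  have h1 : Real.exp ((m : ℝ) - 1) * Real.exp 1 = Real.exp m := by
    rw [← Real.exp_add]; ring_nf
  have hkey2 : 2 * Real.exp 1 * (m : ℝ) ^ c ≤ Real.exp m := by
    rw [← le_div_iff₀ hmc]; exact hkey
  have h2 : 2 * (m : ℝ) ^ c ≤ Real.exp ((m : ℝ) - 1) := by
    have he1 : (0:ℝ) < Real.exp 1 := Real.exp_pos 1
    nlinarith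
  have : ((m : ℝ) ^ c)⁻¹ / 2 = (2 * (m : ℝ) ^ c)⁻¹ := by
    rw [mul_inv]; ring
  rw [this]
  exact inv_anti₀ (by positivity) h2

/-- Tauberian-type lower bound for partial sums of a power series with
nonnegative coefficients whose logarithmic derivative is bounded by `c / (1 - x)`. -/
theorem stmt_0 (c : ℝ) (hc : 0 < c) :
    ∃ K : ℝ, 0 < K ∧
      ∀ (b : ℕ → ℝ) (B B' : ℝ → ℝ),
        (∀ k, 0 ≤ b k) →
        (∀ x : ℝ, 0 ≤ x → x < 1 → HasSum (fun k => b k * x ^ k) (B x)) →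
        (∀ x : ℝ, 0 ≤ x → x < 1 → 0 < B x) →
        (∀ x : ℝ, 0 ≤ x → x < 1 → HasDerivAt B (B' x) x) →
        (∀ x : ℝ, 0 ≤ x → x < 1 → B' x / B x ≤ c / (1 - x)) →
        ∀ N : ℕ, 2 * c ≤ (N : ℝ) →
          K * B (Real.exp (-1 / (N : ℝ))) ≤ ∑ k ∈ Finset.range (N + 1), b k := by
  obtain ⟨m, hm1, hmkey⟩ := exists_good_m c
  have hm0 : (0 : ℝ) < m := by exact_mod_cast hm1
  have hmc : (0 : ℝ) < (m : ℝ) ^ c := Real.rpow_pos_of_pos hm0 c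
  have hmnc : (0 : ℝ) < (m : ℝ) ^ (-c) := Real.rpow_pos_of_pos hm0 (-c)
  refine ⟨(m : ℝ) ^ (-c) / 2, by positivity, ?_⟩
  intro b B B' hb hB hBpos hBd hlog N hN
  have hN0 : 0 < N := by
    by_contra h
    push_neg at h
    interval_cases N
    simp at hN
    linarith
  have hNR : (0 : ℝ) < N := by exact_mod_cast hN0
  set y : ℝ := Real.exp (-1 / (N : ℝ)) with hy
  have hy0 : 0 < y := Real.exp_pos _
  have hy1 : y < 1 := by
    rw [hy, Real.exp_lt_one_iff]
    exact div_neg_of_neg_of_pos (by norm_num) hNR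
  set x : ℝ := y ^ m with hx
  have hx0 : 0 < x := pow_pos hy0 m
  have hx1 : x < 1 := pow_lt_one₀ hy0.le hy1 (by omega)
  have hxy : x ≤ y := by
    calc x = y ^ m := rfl
    _ ≤ y ^ 1 := pow_le_pow_of_le_one hy0.le hy1.le hm1
    _ = y := pow_one y
  -- the function G = B * (1-·)^c is antitone on [0,1)
  set G : ℝ → ℝ := fun t => B t * (1 - t) ^ c with hG
  have hGderiv : ∀ t ∈ Set.Ico (0:ℝ) 1, HasDerivAt G
      (B' t * (1 - t) ^ c + B t * (c * (1 - t) ^ (c - 1) * (-1))) t := by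
    intro t ht
    have h1t : (0:ℝ) < 1 - t := by simp [Set.mem_Ico] at ht; linarith [ht.2]
    have hsub : HasDerivAt (fun u : ℝ => 1 - u) (-1) t := (hasDerivAt_id t).const_sub 1
    have hr : HasDerivAt (fun u : ℝ => (1 - u) ^ c) (c * (1 - t) ^ (c - 1) * (-1)) t := by
      exact (Real.hasDerivAt_rpow_const (p := c) (Or.inl h1t.ne')).comp t hsub
    exact (hBd t ht.1 ht.2).mul hr
  have hGanti : AntitoneOn G (Set.Ico (0:ℝ) 1) := by
    apply antitoneOn_of_deriv_nonpos (convex_Ico 0 1)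
    · intro t ht
      exact (hGderiv t ht).continuousAt.continuousWithinAt
    · rw [interior_Ico]
      intro t ht
      exact ((hGderiv t (Set.mem_Ico_of_Ioo ht)).differentiableAt).differentiableWithinAt
    · rw [interior_Ico]
      intro t ht
      rw [(hGderiv t (Set.mem_Ico_of_Ioo ht)).deriv]
      have h1t : (0:ℝ) < 1 - t := by linarith [ht.2]
      have hBt := hBpos t ht.1.le ht.2
      have hB't : B' t ≤ c / (1 - t) * B t := by
        have := hlog t ht.1.le ht.2
        rw [div_le_div_iff₀ hBt h1t] at this
        rw [div_mul_eq_mul_div, le_div_iff₀ h1t]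
        linarith
      have hrc : (1 - t) ^ c = (1 - t) ^ (c - 1) * (1 - t) := by
        rw [← Real.rpow_add_one h1t.ne' (c - 1)]; ring_nf
      have hrpos : (0:ℝ) ≤ (1 - t) ^ (c - 1) := (Real.rpow_pos_of_pos h1t _).le
      have : B' t * (1 - t) ^ c ≤ B t * (c * (1 - t) ^ (c - 1)) := by
        calc B' t * (1 - t) ^ c ≤ (c / (1 - t) * B t) * (1 - t) ^ c := by
              apply mul_le_mul_of_nonneg_right hB't (Real.rpow_pos_of_pos h1t c).le
        _ = B t * (c * (1 - t) ^ (c - 1)) := by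
              rw [hrc]; field_simp
      linarith
  -- comparison B x ≥ m^{-c} * B y
  have hmem_x : x ∈ Set.Ico (0:ℝ) 1 := ⟨hx0.le, hx1⟩
  have hmem_y : y ∈ Set.Ico (0:ℝ) 1 := ⟨hy0.le, hy1⟩
  have hGle : B y * (1 - y) ^ c ≤ B x * (1 - x) ^ c := hGanti hmem_x hmem_y hxy
  have hbern : 1 - x ≤ (m : ℝ) * (1 - y) := by
    have := one_add_mul_le_pow (a := y - 1) (by linarith) m
    have hyx : (1 : ℝ) + (m:ℝ) * (y - 1) ≤ x := by
      simpa using this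
    nlinarith
  have h1y : (0:ℝ) < 1 - y := by linarith
  have h1x : (0:ℝ) < 1 - x := by linarith
  have hrle : (1 - x) ^ c ≤ (m : ℝ) ^ c * (1 - y) ^ c := by
    rw [← Real.mul_rpow hm0.le h1y.le]
    exact Real.rpow_le_rpow h1x.le hbern hc.le
  have hcomp : (m : ℝ) ^ (-c) * B y ≤ B x := by
    have hBx := hBpos x hx0.le hx1
    have hBy := hBpos y hy0.le hy1
    have : B y * (1 - y) ^ c ≤ (B x * (m : ℝ) ^ c) * (1 - y) ^ c := by
      calc B y * (1 - y) ^ c ≤ B x * (1 - x) ^ c := hGle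
      _ ≤ B x * ((m : ℝ) ^ c * (1 - y) ^ c) := by
          exact mul_le_mul_of_nonneg_left hrle hBx.le
      _ = (B x * (m : ℝ) ^ c) * (1 - y) ^ c := by ring
    have hBy_le : B y ≤ B x * (m : ℝ) ^ c :=
      le_of_mul_le_mul_right this (Real.rpow_pos_of_pos h1y c)
    rw [Real.rpow_neg hm0.le]
    rw [inv_mul_le_iff₀ hmc]
    linarith [hBy_le]
  -- tail bound
  set s : Finset ℕ := Finset.range (N + 1) with hs
  have hSx : Summable (fun k => b k * x ^ k) := (hB x hx0.le hx1).summable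
  have hSy : Summable (fun k => b k * y ^ k) := (hB y hy0.le hy1).summable
  have hBx_eq : (∑ k ∈ s, b k * x ^ k) + ∑' k : ↑((s : Set ℕ))ᶜ, b k * x ^ (k:ℕ) = B x := by
    rw [Summable.sum_add_tsum_compl hSx, (hB x hx0.le hx1).tsum_eq]
  have hBy_eq : (∑ k ∈ s, b k * y ^ k) + ∑' k : ↑((s : Set ℕ))ᶜ, b k * y ^ (k:ℕ) = B y := by
    rw [Summable.sum_add_tsum_compl hSy, (hB y hy0.le hy1).tsum_eq]
  have hterm : ∀ k : ↑((s : Set ℕ))ᶜ, b k * x ^ (k:ℕ) ≤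
      Real.exp (-((m:ℝ) - 1)) * (b k * y ^ (k:ℕ)) := by
    rintro ⟨k, hk⟩
    simp only [hs, Set.mem_compl_iff, Finset.coe_range, Set.mem_Iio, not_lt] at hk
    have hkN : N ≤ k := by omega
    have hkle : k ≤ m * k := Nat.le_mul_of_pos_left k hm1
    have hxk : x ^ k = y ^ k * y ^ ((m - 1) * k) := by
      rw [hx, ← pow_mul, ← pow_add, Nat.sub_mul, one_mul, Nat.add_sub_cancel' hkle]
    have hyexp : y ^ ((m - 1) * N) = Real.exp (-((m:ℝ) - 1)) := by
      rw [hy, ← Real.exp_nat_mul]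
      congr 1
      have hmN : (((m - 1) * N : ℕ) : ℝ) = ((m : ℝ) - 1) * N := by
        push_cast [Nat.cast_sub hm1]
        ring
      rw [hmN]
      field_simp
    have hle : y ^ ((m - 1) * k) ≤ y ^ ((m - 1) * N) :=
      pow_le_pow_of_le_one hy0.le hy1.le (Nat.mul_le_mul_left _ hkN)
    calc b k * x ^ k = b k * (y ^ k * y ^ ((m - 1) * k)) := by rw [hxk]
    _ ≤ b k * (y ^ k * y ^ ((m - 1) * N)) := by
        apply mul_le_mul_of_nonneg_left _ (hb k)
        exact mul_le_mul_of_nonneg_left hle (pow_nonneg hy0.le k)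
    _ = Real.exp (-((m:ℝ) - 1)) * (b k * y ^ k) := by rw [hyexp]; ring
  have htailx : (∑' k : ↑((s : Set ℕ))ᶜ, b k * x ^ (k:ℕ)) ≤
      Real.exp (-((m:ℝ) - 1)) * B y := by
    have h1 : (∑' k : ↑((s : Set ℕ))ᶜ, b k * x ^ (k:ℕ)) ≤
        ∑' k : ↑((s : Set ℕ))ᶜ, Real.exp (-((m:ℝ) - 1)) * (b k * y ^ (k:ℕ)) := by
      apply Summable.tsum_le_tsum hterm (hSx.subtype _) ((hSy.subtype _).mul_left _)
    have h2 : (∑' k : ↑((s : Set ℕ))ᶜ, Real.exp (-((m:ℝ) - 1)) * (b k * y ^ (k:ℕ)))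
        = Real.exp (-((m:ℝ) - 1)) * ∑' k : ↑((s : Set ℕ))ᶜ, b k * y ^ (k:ℕ) := by
      exact tsum_mul_left
    have h3 : (∑' k : ↑((s : Set ℕ))ᶜ, b k * y ^ (k:ℕ)) ≤ B y := by
      have hpart : 0 ≤ ∑ k ∈ s, b k * y ^ k :=
        Finset.sum_nonneg fun k _ => mul_nonneg (hb k) (pow_nonneg hy0.le k)
      linarith [hBy_eq]
    calc (∑' k : ↑((s : Set ℕ))ᶜ, b k * x ^ (k:ℕ)) ≤ _ := h1
    _ = Real.exp (-((m:ℝ) - 1)) * ∑' k : ↑((s : Set ℕ))ᶜ, b k * y ^ (k:ℕ) := h2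
    _ ≤ Real.exp (-((m:ℝ) - 1)) * B y := by
        apply mul_le_mul_of_nonneg_left h3 (Real.exp_pos _).le
  -- put it together
  have hsum1 : (∑ k ∈ s, b k * x ^ k) ≤ ∑ k ∈ s, b k := by
    apply Finset.sum_le_sum
    intro k _
    exact mul_le_of_le_one_right (hb k) (pow_le_one₀ hx0.le hx1.le)
  have hBy := hBpos y hy0.le hy1
  calc (m : ℝ) ^ (-c) / 2 * B y
      ≤ (m : ℝ) ^ (-c) * B y - Real.exp (-((m:ℝ) - 1)) * B y := by
        nlinarith [hmkey, hBy]
  _ ≤ B x - Real.exp (-((m:ℝ) - 1)) * B y := by linarith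
  _ ≤ (∑ k ∈ s, b k * x ^ k) := by linarith [hBx_eq, htailx]
  _ ≤ ∑ k ∈ s, b k := hsum1
end

section
/- Let p(z) = exp(Σ_{k≥1} (d_k/k) z^k) = Σ_{n≥0} p_n z^n where 0 < d⁻ ≤ d_k ≤ d⁺. Then the coefficients satisfy the recurrence n·p_n = Σ_{k=1}^n d_k p_{n-k} for all n ≥ 1, and consequently p_n ≤ d⁺·e·p(e^{-1/n})/n for n ≥ 1. -/
open Filter Finset

lemma bdd_of_summable (f : ℕ → ℝ) (h : Summable f) : ∃ M : ℝ, ∀ n, |f n| ≤ M := by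
  have ht : Tendsto (fun n => |f n|) atTop (nhds 0) := by
    simpa using h.tendsto_atTop_zero.abs
  obtain ⟨M, hM⟩ := ht.bddAbove_range
  exact ⟨M, fun n => hM ⟨n, rfl⟩⟩

lemma coeff_zero_head (c : ℕ → ℝ)
    (h : ∀ x : ℝ, 0 < x → x < 1 → HasSum (fun n => c n * x ^ n) 0) : c 0 = 0 := by
  obtain ⟨M, hM⟩ := bdd_of_summable _ (h (1/2) (by norm_num) (by norm_num)).summable
  have hM' : ∀ n : ℕ, |c n| * (1/2:ℝ)^n ≤ M := by
    intro n
    have h12 : |c n * (1/2:ℝ)^n| = |c n| * (1/2:ℝ)^n := by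
      rw [abs_mul, abs_pow, abs_of_pos (by norm_num : (0:ℝ) < 1/2)]
    rw [← h12]; exact hM n
  have hM0 : 0 ≤ M := le_trans (by positivity) (hM' 0)
  have key : ∀ x : ℝ, 0 < x → x ≤ 1/4 → |c 0| ≤ 4 * M * x := by
    intro x hx0 hx4
    have hx1 : x < 1 := by linarith
    have h2x : (0:ℝ) ≤ 2*x := by linarith
    have h2x1 : 2*x ≤ 1/2 := by linarith
    have hx := h x hx0 hx1
    have h1 : HasSum (fun n => c (n+1) * x ^ (n+1)) (-(c 0)) := by
      have := (hasSum_nat_add_iff' (f := fun n => c n * x ^ n) 1).2 hx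
      simpa using this
    have hgeo : Summable (fun n : ℕ => M * (2*x) ^ (n+1)) := by
      have hg : Summable (fun n : ℕ => (2*x) ^ n) :=
        summable_geometric_of_lt_one h2x (by linarith)
      exact ((hg.mul_left (2*x)).congr (fun n => by ring)).mul_left M
    have hterm : ∀ n : ℕ, |c (n+1) * x ^ (n+1)| ≤ M * (2*x) ^ (n+1) := by
      intro n
      have hMn := hM' (n+1)
      have hcol : ((1:ℝ)/2)^(n+1) * (2*x)^(n+1) = x^(n+1) := by
        rw [← mul_pow]; congr 1; ring
      have hxpow : |c (n+1) * x ^ (n+1)| = (|c (n+1)| * (1/2:ℝ)^(n+1)) * (2*x)^(n+1) := by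
        rw [abs_mul, abs_pow, abs_of_pos hx0, mul_assoc, hcol]
      rw [hxpow]
      exact mul_le_mul_of_nonneg_right hMn (by positivity)
    have habs : Summable (fun n => |c (n+1) * x ^ (n+1)|) :=
      Summable.of_nonneg_of_le (fun n => abs_nonneg _) hterm hgeo
    have hnorm : |∑' n, c (n+1) * x ^ (n+1)| ≤ ∑' n, |c (n+1) * x ^ (n+1)| := by
      have := norm_tsum_le_tsum_norm (f := fun n => c (n+1) * x ^ (n+1))
        (by simpa only [Real.norm_eq_abs] using habs)
      simpa only [Real.norm_eq_abs] using this
    have hb : |c 0| ≤ ∑' n, M * (2*x) ^ (n+1) := by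
      rw [show |c 0| = |(-(c 0))| by rw [abs_neg]]
      calc |(-(c 0))| = |∑' n, c (n+1) * x ^ (n+1)| := by rw [h1.tsum_eq]
        _ ≤ ∑' n, |c (n+1) * x ^ (n+1)| := hnorm
        _ ≤ ∑' n, M * (2*x) ^ (n+1) := Summable.tsum_le_tsum hterm habs hgeo
    have hgval : ∑' n : ℕ, M * (2*x) ^ (n+1) ≤ 4 * M * x := by
      have hsum : ∑' n : ℕ, M * (2*x) ^ (n+1) = M * ((2*x) * (1 - 2*x)⁻¹) := by
        rw [tsum_mul_left]
        congr 1
        rw [show (fun n : ℕ => (2*x)^(n+1)) = fun n : ℕ => (2*x)^n * (2*x) from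
          funext fun n => by ring]
        rw [tsum_mul_right, tsum_geometric_of_lt_one h2x (by linarith)]
        ring
      rw [hsum]
      have hinv : (1 - 2*x)⁻¹ ≤ 2 := by
        have h12 : (1/2:ℝ) ≤ 1 - 2*x := by linarith
        have := one_div_le_one_div_of_le (by norm_num : (0:ℝ) < 1/2) h12
        rw [one_div] at this
        calc (1 - 2*x)⁻¹ ≤ 1 / (1/2) := this
          _ = 2 := by norm_num
      calc M * ((2*x) * (1 - 2*x)⁻¹) ≤ M * ((2*x) * 2) := by
            apply mul_le_mul_of_nonneg_left _ hM0
            apply mul_le_mul_of_nonneg_left hinv h2x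
        _ = 4 * M * x := by ring
    linarith
  by_contra hc
  have hpos : 0 < |c 0| := abs_pos.2 hc
  set t := |c 0| / (8 * M + 8) with htdef
  have ht0 : 0 < t := by positivity
  have hx0 : 0 < min (1/4 : ℝ) t := lt_min (by norm_num) ht0
  have hkey := key _ hx0 (min_le_left _ _)
  have h1 : 4 * M * min (1/4:ℝ) t ≤ 4 * M * t :=
    mul_le_mul_of_nonneg_left (min_le_right _ _) (by positivity)
  have h2 : 4 * M * t < (8 * M + 8) * t := by nlinarith
  have h3 : (8 * M + 8) * t = |c 0| := by
    rw [htdef, mul_div_cancel₀]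
    positivity
  linarith

lemma coeff_zero_shift (c : ℕ → ℝ)
    (h : ∀ x : ℝ, 0 < x → x < 1 → HasSum (fun n => c n * x ^ n) 0) :
    ∀ x : ℝ, 0 < x → x < 1 → HasSum (fun n => c (n+1) * x ^ n) 0 := by
  have h0 := coeff_zero_head c h
  intro x hx0 hx1
  have hx := h x hx0 hx1
  have h1 : HasSum (fun n => c (n+1) * x ^ (n+1)) 0 := by
    have := (hasSum_nat_add_iff' (f := fun n => c n * x ^ n) 1).2 hx
    simpa [h0] using this
  have heq : (fun n : ℕ => c (n+1) * x ^ (n+1)) = fun n => (c (n+1) * x ^ n) * x :=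
    funext fun n => by ring
  rw [heq, show (0:ℝ) = 0 * x by ring] at h1
  exact (hasSum_mul_right_iff hx0.ne').1 h1

lemma coeff_zero (c : ℕ → ℝ)
    (h : ∀ x : ℝ, 0 < x → x < 1 → HasSum (fun n => c n * x ^ n) 0) :
    ∀ n, c n = 0 := by
  intro n
  induction n generalizing c with
  | zero => exact coeff_zero_head c h
  | succ n ih => exact ih _ (coeff_zero_shift c h)

lemma summable_aux (a : ℕ → ℝ)
    (hsum : ∀ x : ℝ, 0 ≤ x → x < 1 → Summable (fun n => a n * x ^ n))
    (x : ℝ) (hx0 : 0 ≤ x) (hx1 : x < 1) (k : ℕ) :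
    Summable (fun n : ℕ => (n:ℝ)^k * (|a n| * x ^ n)) := by
  set y := (x+1)/2 with hy
  have hy0 : 0 < y := by rw [hy]; linarith
  have hy1 : y < 1 := by rw [hy]; linarith
  have hxy : x < y := by rw [hy]; linarith
  obtain ⟨M, hM⟩ := bdd_of_summable _ (hsum y hy0.le hy1)
  have hM' : ∀ n, |a n| * y^n ≤ M := by
    intro n
    have := hM n
    rwa [abs_mul, abs_pow, abs_of_pos hy0] at this
  have hr : x / y < 1 := (div_lt_one hy0).2 hxy
  have hr0 : 0 ≤ x / y := by positivity
  have hgeo : Summable (fun n : ℕ => M * ((n:ℝ)^k * (x/y)^n)) :=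
    (summable_pow_mul_geometric_of_norm_lt_one k
      (by rwa [Real.norm_eq_abs, abs_of_nonneg hr0])).mul_left M
  apply Summable.of_nonneg_of_le (fun n => by positivity) _ hgeo
  intro n
  have hxn : x ^ n = y ^ n * (x/y)^n := by
    rw [← mul_pow]
    congr 1
    field_simp
  calc (n:ℝ)^k * (|a n| * x ^ n) = (|a n| * y^n) * ((n:ℝ)^k * (x/y)^n) := by
        rw [hxn]; ring
    _ ≤ M * ((n:ℝ)^k * (x/y)^n) := mul_le_mul_of_nonneg_right (hM' n) (by positivity)

/-- The Taylor coefficients of `p(z) = exp(∑ d_k z^k / k)` satisfy the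
recurrence `n p_n = ∑_{k=1}^n d_k p_{n-k}` and the bound `p_n ≤ d⁺ e p(e^{-1/n}) / n`. -/
theorem stmt_2 (d : ℕ → ℝ) (dm dp : ℝ) (hdm : 0 < dm)
    (hd : ∀ k : ℕ, 1 ≤ k → dm ≤ d k ∧ d k ≤ dp)
    (p : ℕ → ℝ)
    (hp : ∀ x : ℝ, 0 ≤ x → x < 1 →
      HasSum (fun n => p n * x ^ n)
        (Real.exp (∑' k : ℕ, d (k + 1) * x ^ (k + 1) / ((k : ℝ) + 1)))) :
    (∀ n : ℕ, 1 ≤ n → (n : ℝ) * p n = ∑ k ∈ Finset.Icc 1 n, d k * p (n - k)) ∧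
    ∀ n : ℕ, 1 ≤ n →
      p n ≤ dp * Real.exp 1 *
        Real.exp (∑' k : ℕ, d (k + 1) * Real.exp (-1 / (n : ℝ)) ^ (k + 1) / ((k : ℝ) + 1))
          / (n : ℝ) := by
  have hdp0 : 0 < dp := lt_of_lt_of_le hdm ((hd 1 le_rfl).1.trans (hd 1 le_rfl).2)
  have hdpos : ∀ k : ℕ, 0 < d (k + 1) := fun k =>
    lt_of_lt_of_le hdm (hd (k+1) (Nat.succ_le_succ (Nat.zero_le k))).1
  have hpsum : ∀ x : ℝ, 0 ≤ x → x < 1 → Summable (fun n => p n * x ^ n) :=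
    fun x h0 h1 => (hp x h0 h1).summable
  -- The key coefficient identity
  set c : ℕ → ℝ := fun n =>
    ((n:ℝ)+1) * p (n+1) - ∑ k ∈ range (n+1), d (k+1) * p (n-k) with hcdef
  have hc : ∀ x : ℝ, 0 < x → x < 1 → HasSum (fun n => c n * x ^ n) 0 := by
    intro x hx0 hx1
    set b := (x+1)/2 with hb
    have hb0 : 0 < b := by rw [hb]; linarith
    have hb1 : b < 1 := by rw [hb]; linarith
    have hxb : x < b := by rw [hb]; linarith
    have hxmem : x ∈ Set.Ioo (-b) b := ⟨by linarith, hxb⟩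
    have h0mem : (0:ℝ) ∈ Set.Ioo (-b) b := ⟨by linarith, hb0⟩
    -- derivative of G(z) = ∑' p n z^n at x
    have hu1 : Summable (fun n : ℕ => (1/b) * ((n:ℝ)^1 * (|p n| * b^n))) :=
      (summable_aux p hpsum b hb0.le hb1 1).mul_left _
    have hG : HasDerivAt (fun z : ℝ => ∑' n, p n * z ^ n)
        (∑' n, p n * ((n:ℝ) * x ^ (n-1))) x := by
      apply hasDerivAt_tsum_of_isPreconnected hu1 isOpen_Ioo isPreconnected_Ioo
        (fun n y _ => (hasDerivAt_pow n y).const_mul (p n)) ?_ h0mem ?_ hxmem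
      · intro n y hy
        rcases n with _ | m
        · simp
        · have hyb : |y| ≤ b := le_of_lt (abs_lt.2 ⟨hy.1, hy.2⟩)
          have hnorm : ‖p (m+1) * ((↑(m+1):ℝ) * y ^ (m+1-1))‖
              = |p (m+1)| * ((m+1:ℝ) * |y|^m) := by
            rw [Real.norm_eq_abs, abs_mul, abs_mul, abs_pow, Nat.abs_cast]
            push_cast
            ring
          rw [hnorm]
          calc |p (m+1)| * ((m+1:ℝ) * |y|^m)
              ≤ |p (m+1)| * ((m+1:ℝ) * b^m) := by
                apply mul_le_mul_of_nonneg_left _ (abs_nonneg _)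
                apply mul_le_mul_of_nonneg_left _ (by positivity)
                exact pow_le_pow_left₀ (abs_nonneg _) hyb m
            _ = (1/b) * ((↑(m+1):ℝ)^1 * (|p (m+1)| * b^(m+1))) := by
                field_simp
                push_cast
                ring
      · apply summable_of_ne_finset_zero (s := {0})
        intro n hn
        simp only [Finset.mem_singleton] at hn
        simp [zero_pow hn]
    -- derivative of exp(Sf) at x
    have hu2 : Summable (fun k : ℕ => dp * b^k) :=
      (summable_geometric_of_lt_one hb0.le hb1).mul_left dp
    have hder : ∀ (k : ℕ) (y : ℝ), y ∈ Set.Ioo (-b) b →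
        HasDerivAt (fun z : ℝ => d (k+1) * z ^ (k+1) / ((k:ℝ)+1)) (d (k+1) * y ^ k) y := by
      intro k y _
      have hk0 : ((k:ℝ)+1) ≠ 0 := by positivity
      have h1 : HasDerivAt (fun z : ℝ => (d (k+1) / ((k:ℝ)+1)) * z^(k+1))
          ((d (k+1) / ((k:ℝ)+1)) * ((↑(k+1):ℝ) * y^(k+1-1))) y :=
        (hasDerivAt_pow (k+1) y).const_mul _
      have hfun : (fun z : ℝ => d (k+1) * z^(k+1) / ((k:ℝ)+1))
          = fun z : ℝ => (d (k+1) / ((k:ℝ)+1)) * z^(k+1) := funext fun z => by ring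
      rw [hfun]
      convert h1 using 1
      push_cast
      field_simp
    have hbd : ∀ (k : ℕ) (y : ℝ), y ∈ Set.Ioo (-b) b → ‖d (k+1) * y ^ k‖ ≤ dp * b ^ k := by
      intro k y hy
      have hyb : |y| ≤ b := le_of_lt (abs_lt.2 ⟨hy.1, hy.2⟩)
      have hdk := hdpos k
      have hne : ‖d (k+1) * y ^ k‖ = d (k+1) * |y|^k := by
        rw [Real.norm_eq_abs, abs_mul, abs_pow, abs_of_pos hdk]
      rw [hne]
      apply mul_le_mul ((hd (k+1) (Nat.succ_le_succ (Nat.zero_le k))).2)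
        (pow_le_pow_left₀ (abs_nonneg _) hyb k) (by positivity) hdp0.le
    have h00 : Summable (fun k : ℕ => d (k+1) * (0:ℝ) ^ (k+1) / ((k:ℝ)+1)) := by
      apply summable_zero.congr
      intro k
      simp [zero_pow (Nat.succ_ne_zero k)]
    have hS : HasDerivAt (fun z : ℝ => ∑' k : ℕ, d (k+1) * z ^ (k+1) / ((k:ℝ)+1))
        (∑' k : ℕ, d (k+1) * x ^ k) x :=
      hasDerivAt_tsum_of_isPreconnected hu2 isOpen_Ioo isPreconnected_Ioo
        hder hbd h0mem h00 hxmem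
    have hexp : HasDerivAt
        (fun y : ℝ => Real.exp (∑' k : ℕ, d (k+1) * y ^ (k+1) / ((k:ℝ)+1)))
        (Real.exp (∑' k : ℕ, d (k+1) * x ^ (k+1) / ((k:ℝ)+1)) *
          ∑' k : ℕ, d (k+1) * x ^ k) x := hS.exp
    -- the two functions agree near x
    have hEq : (fun y : ℝ => Real.exp (∑' k : ℕ, d (k+1) * y ^ (k+1) / ((k:ℝ)+1)))
        =ᶠ[nhds x] (fun z : ℝ => ∑' n, p n * z ^ n) := by
      apply Filter.eventuallyEq_of_mem (Ioo_mem_nhds hx0 hx1)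
      intro y hy
      exact ((hp y hy.1.le hy.2).tsum_eq).symm
    have hG2 : HasDerivAt
        (fun y : ℝ => Real.exp (∑' k : ℕ, d (k+1) * y ^ (k+1) / ((k:ℝ)+1)))
        (∑' n, p n * ((n:ℝ) * x ^ (n-1))) x :=
      hG.congr_of_eventuallyEq hEq
    have hder_eq : (∑' n, p n * ((n:ℝ) * x ^ (n-1)))
        = Real.exp (∑' k : ℕ, d (k+1) * x ^ (k+1) / ((k:ℝ)+1)) *
          ∑' k : ℕ, d (k+1) * x ^ k := hG2.unique hexp
    -- Cauchy product
    have hfd : Summable (fun k : ℕ => ‖d (k+1) * x ^ k‖) := by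
      apply Summable.of_nonneg_of_le (fun k => norm_nonneg _) _
        ((summable_geometric_of_lt_one hx0.le hx1).mul_left dp)
      intro k
      rw [Real.norm_eq_abs, abs_mul, abs_pow, abs_of_pos hx0, abs_of_pos (hdpos k)]
      exact mul_le_mul_of_nonneg_right ((hd (k+1) (Nat.succ_le_succ (Nat.zero_le k))).2)
        (by positivity)
    have hfp : Summable (fun n : ℕ => ‖p n * x ^ n‖) := by
      have := summable_aux p hpsum x hx0.le hx1 0
      apply this.congr
      intro n
      rw [Real.norm_eq_abs, abs_mul, abs_pow, abs_of_pos hx0]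
      simp
    have hcauchy := hasSum_sum_range_mul_of_summable_norm hfd hfp
    have htsum_p : (∑' n, p n * x ^ n)
        = Real.exp (∑' k : ℕ, d (k+1) * x ^ (k+1) / ((k:ℝ)+1)) :=
      (hp x hx0.le hx1).tsum_eq
    have hRHS : HasSum (fun n => (∑ k ∈ range (n+1), d (k+1) * p (n-k)) * x ^ n)
        (Real.exp (∑' k : ℕ, d (k+1) * x ^ (k+1) / ((k:ℝ)+1)) *
          ∑' k : ℕ, d (k+1) * x ^ k) := by
      have hterm : ∀ n : ℕ, (∑ k ∈ range (n+1), (d (k+1) * x ^ k) * (p (n-k) * x ^ (n-k)))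
          = (∑ k ∈ range (n+1), d (k+1) * p (n-k)) * x ^ n := by
        intro n
        rw [Finset.sum_mul]
        apply Finset.sum_congr rfl
        intro k hk
        have hkn : k ≤ n := Finset.mem_range_succ_iff.1 hk
        have hxkn : x ^ k * x ^ (n-k) = x ^ n := by
          rw [← pow_add]
          congr 1
          omega
        calc (d (k+1) * x ^ k) * (p (n-k) * x ^ (n-k))
            = d (k+1) * p (n-k) * (x ^ k * x ^ (n-k)) := by ring
          _ = d (k+1) * p (n-k) * x ^ n := by rw [hxkn]
      have := hcauchy
      rw [htsum_p] at this
      have hval : (∑' k : ℕ, d (k+1) * x ^ k) *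
          Real.exp (∑' k : ℕ, d (k+1) * x ^ (k+1) / ((k:ℝ)+1))
          = Real.exp (∑' k : ℕ, d (k+1) * x ^ (k+1) / ((k:ℝ)+1)) *
            ∑' k : ℕ, d (k+1) * x ^ k := mul_comm _ _
      rw [hval] at this
      rw [show (fun n => (∑ k ∈ range (n+1), d (k+1) * p (n-k)) * x ^ n)
        = fun n => ∑ k ∈ range (n+1), (d (k+1) * x ^ k) * (p (n-k) * x ^ (n-k)) from
        funext fun n => (hterm n).symm]
      exact this
    -- LHS has sum as a series
    have hsum' : Summable (fun n : ℕ => p n * ((n:ℝ) * x ^ (n-1))) := by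
      apply Summable.of_norm
      apply Summable.of_nonneg_of_le (fun n => norm_nonneg _) _
        ((summable_aux p hpsum x hx0.le hx1 1).mul_left (1/x))
      intro n
      rcases n with _ | m
      · simp
      · have heq : ‖p (m+1) * ((↑(m+1):ℝ) * x ^ (m+1-1))‖
            = |p (m+1)| * ((m+1:ℝ) * x^m) := by
          rw [Real.norm_eq_abs, abs_mul, abs_mul, abs_pow, Nat.abs_cast,
            abs_of_pos hx0]
          push_cast
          ring
        rw [heq]
        apply le_of_eq
        field_simp
        push_cast
        ring
    have hLeft : HasSum (fun n : ℕ => p n * ((n:ℝ) * x ^ (n-1)))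
        (Real.exp (∑' k : ℕ, d (k+1) * x ^ (k+1) / ((k:ℝ)+1)) *
          ∑' k : ℕ, d (k+1) * x ^ k) := by
      rw [← hder_eq]
      exact hsum'.hasSum
    have hLeft' : HasSum (fun n : ℕ => p (n+1) * (((n:ℝ)+1) * x ^ n))
        (Real.exp (∑' k : ℕ, d (k+1) * x ^ (k+1) / ((k:ℝ)+1)) *
          ∑' k : ℕ, d (k+1) * x ^ k) := by
      have := (hasSum_nat_add_iff'
        (f := fun n : ℕ => p n * ((n:ℝ) * x ^ (n-1))) 1).2 hLeft
      simp only [Nat.add_sub_cancel, Nat.cast_add, Nat.cast_one, Nat.cast_zero,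
        range_one, sum_singleton, zero_mul, mul_zero, sub_zero, pow_zero] at this
      convert this using 2
      all_goals push_cast; ring
    have hdiff := hLeft'.sub hRHS
    rw [sub_self] at hdiff
    have hfinal : (fun n : ℕ => p (n+1) * (((n:ℝ)+1) * x ^ n)
        - (∑ k ∈ range (n+1), d (k+1) * p (n-k)) * x ^ n)
        = fun n => c n * x ^ n := by
      funext n
      rw [hcdef]
      ring
    rw [hfinal] at hdiff
    exact hdiff
  have hc0 : ∀ n, c n = 0 := coeff_zero c hc
  -- recurrence
  have hrec : ∀ n : ℕ, 1 ≤ n → (n : ℝ) * p n = ∑ k ∈ Finset.Icc 1 n, d k * p (n - k) := by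
    intro n hn
    obtain ⟨m, rfl⟩ : ∃ m, n = m + 1 := ⟨n - 1, (Nat.succ_pred_eq_of_pos hn).symm⟩
    have hcm := hc0 m
    rw [hcdef] at hcm
    have hcm' : ((m:ℝ)+1) * p (m+1) = ∑ k ∈ range (m+1), d (k+1) * p (m-k) :=
      sub_eq_zero.1 hcm
    rw [← Finset.Ico_add_one_right_eq_Icc, Finset.sum_Ico_eq_sum_range]
    have h1 : m + 1 + 1 - 1 = m + 1 := by omega
    rw [h1]
    have h2 : ∑ i ∈ range (m+1), d (1+i) * p (m+1-(1+i))
        = ∑ k ∈ range (m+1), d (k+1) * p (m-k) := by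
      apply Finset.sum_congr rfl
      intro i _
      congr 1
      · congr 1
        omega
      · congr 1
        omega
    rw [h2, ← hcm']
    push_cast
    ring
  refine ⟨hrec, ?_⟩
  -- p 0 = 1
  have hp00 := hp 0 le_rfl (by norm_num)
  have hz : (∑' k : ℕ, d (k+1) * (0:ℝ)^(k+1) / ((k:ℝ)+1)) = 0 := by
    rw [show (fun k : ℕ => d (k+1) * (0:ℝ)^(k+1) / ((k:ℝ)+1)) = fun _ => (0:ℝ) from
      funext fun k => by simp [zero_pow (Nat.succ_ne_zero k)]]
    exact tsum_zero
  rw [hz, Real.exp_zero] at hp00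
  have hp02 : HasSum (fun n : ℕ => p n * (0:ℝ)^n) (p 0) := by
    rw [show (fun n : ℕ => p n * (0:ℝ)^n) = fun n => if n = 0 then p 0 else 0 from
      funext fun n => by rcases n with _ | m <;> simp [zero_pow]]
    exact hasSum_ite_eq 0 (p 0)
  have p0 : p 0 = 1 := hp02.unique hp00
  -- nonnegativity
  have pnonneg : ∀ n, 0 ≤ p n := by
    intro n
    induction n using Nat.strong_induction_on with
    | _ n ih =>
      rcases n with _ | m
      · rw [p0]; norm_num
      · have h1 : (0:ℝ) ≤ (↑(m+1):ℝ) * p (m+1) := by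
          rw [hrec (m+1) (Nat.succ_le_succ (Nat.zero_le m))]
          apply Finset.sum_nonneg
          intro k hk
          have hk1 : 1 ≤ k := (Finset.mem_Icc.1 hk).1
          have hdk : 0 ≤ d k := le_trans hdm.le (hd k hk1).1
          exact mul_nonneg hdk (ih _ (by omega))
        have hpos : (0:ℝ) < (↑(m+1):ℝ) := by positivity
        by_contra hneg
        push_neg at hneg
        nlinarith
  -- final bound
  intro n hn
  have hnpos : (0:ℝ) < (n:ℝ) := by exact_mod_cast hn
  set x := Real.exp (-1 / (n:ℝ)) with hxdef
  have hx0 : 0 < x := Real.exp_pos _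
  have h1n : 0 < 1 / (n:ℝ) := by positivity
  have hx1 : x < 1 := by
    rw [hxdef]
    apply Real.exp_lt_one_iff.2
    rw [neg_div]
    linarith
  have step1 : (n:ℝ) * p n ≤ dp * ∑ j ∈ range n, p j := by
    rw [hrec n hn]
    calc ∑ k ∈ Finset.Icc 1 n, d k * p (n-k)
        ≤ ∑ k ∈ Finset.Icc 1 n, dp * p (n-k) := by
          apply Finset.sum_le_sum
          intro k hk
          exact mul_le_mul_of_nonneg_right (hd k (Finset.mem_Icc.1 hk).1).2 (pnonneg _)
      _ = dp * ∑ k ∈ Finset.Icc 1 n, p (n-k) := by rw [Finset.mul_sum]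
      _ = dp * ∑ j ∈ range n, p j := by
          congr 1
          rw [← Finset.Ico_add_one_right_eq_Icc, Finset.sum_Ico_eq_sum_range]
          have h1 : n + 1 - 1 = n := by omega
          rw [h1]
          have h2 : ∑ i ∈ range n, p (n - (1 + i)) = ∑ i ∈ range n, p (n - 1 - i) :=
            Finset.sum_congr rfl fun i _ => by congr 1; omega
          rw [h2, Finset.sum_range_reflect]
  have step2 : ∑ j ∈ range n, p j ≤ Real.exp 1 * ∑ j ∈ range n, p j * x^j := by
    rw [Finset.mul_sum]
    apply Finset.sum_le_sum
    intro j hj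
    have hjn : (j:ℝ) ≤ (n:ℝ) := by
      exact_mod_cast le_of_lt (Finset.mem_range.1 hj)
    have hxj : x ^ j = Real.exp ((j:ℝ) * (-1 / (n:ℝ))) := by
      rw [hxdef, ← Real.exp_nat_mul]
    have hkey : 1 ≤ Real.exp 1 * x ^ j := by
      rw [hxj, ← Real.exp_add]
      rw [show (1:ℝ) + (j:ℝ) * (-1 / (n:ℝ)) = 1 - (j:ℝ)/(n:ℝ) by ring]
      rw [show (1:ℝ) = Real.exp 0 from (Real.exp_zero).symm]
      apply Real.exp_le_exp.2
      have : (j:ℝ)/(n:ℝ) ≤ 1 := (div_le_one hnpos).2 hjn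
      simp only [Real.exp_zero]  -- clean up after rw
      linarith
    calc p j = p j * 1 := by ring
      _ ≤ p j * (Real.exp 1 * x^j) := mul_le_mul_of_nonneg_left hkey (pnonneg j)
      _ = Real.exp 1 * (p j * x^j) := by ring
  have hhs := hp x hx0.le hx1
  have step3 : ∑ j ∈ range n, p j * x^j
      ≤ Real.exp (∑' k : ℕ, d (k+1) * x^(k+1) / ((k:ℝ)+1)) := by
    calc ∑ j ∈ range n, p j * x^j ≤ ∑' j, p j * x^j :=
          Summable.sum_le_tsum _ (fun i _ => mul_nonneg (pnonneg i) (pow_nonneg hx0.le i))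
            hhs.summable
      _ = _ := hhs.tsum_eq
  have chain : (n:ℝ) * p n
      ≤ dp * (Real.exp 1 * Real.exp (∑' k : ℕ, d (k+1) * x^(k+1) / ((k:ℝ)+1))) := by
    refine le_trans step1 ?_
    apply mul_le_mul_of_nonneg_left _ hdp0.le
    refine le_trans step2 ?_
    exact mul_le_mul_of_nonneg_left step3 (Real.exp_pos 1).le
  rw [le_div_iff₀ hnpos]
  calc p n * (n:ℝ) = (n:ℝ) * p n := mul_comm _ _
    _ ≤ dp * (Real.exp 1 * Real.exp (∑' k : ℕ, d (k+1) * x^(k+1) / ((k:ℝ)+1))) := chain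
    _ = dp * Real.exp 1 * Real.exp (∑' k : ℕ, d (k+1) * x^(k+1) / ((k:ℝ)+1)) := by ring
end

section
/- Let p(z) = exp(Σ_{k≥1} (d_k/k) z^k) with 0 < d⁻ ≤ d_k ≤ d⁺. Then all Taylor coefficients p_n are positive, and there is a constant K = K(d⁻, d⁺) > 0 with p_n ≥ K · p(e^{-1/n})/n for all n ≥ 1. -/
open Finset Real

/-- Uniqueness of power series coefficients (one-sided). -/
lemma aux_coeff_zero (a : ℕ → ℝ) (Q : ℝ)
    (hQ : ∀ n, |a n| ≤ Q * (n + 1) * 2 ^ n)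
    (h0 : ∀ x : ℝ, 0 < x → x < 1/8 → ∑' n, a n * x ^ n = 0) :
    ∀ n, a n = 0 := by
  have hQ0 : 0 ≤ Q := by
    have := hQ 0
    have h0' := abs_nonneg (a 0)
    nlinarith
  have hsabs : ∀ x : ℝ, 0 < x → x ≤ 1/8 → Summable (fun k => |a k| * x ^ k) := by
    intro x hx hx8
    have h2x : ‖(2*x : ℝ)‖ < 1 := by
      rw [Real.norm_eq_abs, abs_of_pos (by linarith)]; linarith
    have hsum1 := (summable_pow_mul_geometric_of_norm_lt_one 1 h2x).add
      (summable_geometric_of_norm_lt_one h2x)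
    have hgeom : Summable (fun k : ℕ => Q * (((k:ℝ) + 1) * (2*x) ^ k)) := hsum1.mul_left Q |>.congr (by
      intro k; rw [pow_one]; ring)
    refine Summable.of_nonneg_of_le (fun k => by positivity) (fun k => ?_) hgeom
    have h1 : |a k| * x ^ k ≤ (Q * (k + 1) * 2 ^ k) * x ^ k :=
      mul_le_mul_of_nonneg_right (hQ k) (by positivity)
    calc |a k| * x ^ k ≤ (Q * (k + 1) * 2 ^ k) * x ^ k := h1
      _ = Q * (((k:ℝ) + 1) * (2*x) ^ k) := by rw [mul_pow]; ring
  have hs : ∀ x : ℝ, 0 < x → x ≤ 1/8 → Summable (fun k => a k * x ^ k) := by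
    intro x hx hx8
    apply Summable.of_abs
    apply (hsabs x hx hx8).congr
    intro k
    rw [abs_mul, abs_of_pos (by positivity : (0:ℝ) < x ^ k)]
  intro n
  induction n using Nat.strong_induction_on with
  | _ n ih =>
  have hρ0 : (0:ℝ) < 1/16 := by norm_num
  have hCsum : Summable (fun i => |a (i + 1 + n)| * (1/16:ℝ) ^ (i + 1)) := by
    have h1 : Summable (fun i => |a (i + (n+1))| * (1/16:ℝ) ^ (i + (n+1))) :=
      (_root_.summable_nat_add_iff (f := fun k => |a k| * (1/16:ℝ) ^ k) (n+1)).2 (hsabs (1/16) hρ0 (by norm_num))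
    have h2 := h1.mul_right (((1/16:ℝ) ^ n)⁻¹)
    apply h2.congr
    intro i
    have he : i + (n + 1) = (i + 1) + n := by omega
    rw [he, pow_add]
    field_simp
  set C : ℝ := ∑' i, |a (i + 1 + n)| * (1/16:ℝ) ^ (i + 1) with hCdef
  have hC0 : 0 ≤ C := tsum_nonneg (fun i => by positivity)
  have key : ∀ x : ℝ, 0 < x → x < 1/16 → |a n| ≤ (x / (1/16)) * C := by
    intro x hx hxρ
    have hx8 : x ≤ 1/8 := by linarith
    have hsx := hs x hx hx8
    have htot : ∑' k, a k * x ^ k = 0 := h0 x hx (by linarith)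
    have hsplit := Summable.sum_add_tsum_nat_add n hsx
    have hhead : ∑ i ∈ range n, a i * x ^ i = 0 := by
      apply Finset.sum_eq_zero
      intro i hi
      rw [ih i (Finset.mem_range.1 hi)]; ring
    have htail : ∑' i, a (i + n) * x ^ (i + n) = 0 := by
      rw [hhead, htot] at hsplit; linarith
    have hsx2 : Summable (fun i => a (i + n) * x ^ i) := by
      have h1 : Summable (fun i => a (i + n) * x ^ (i + n)) :=
        (_root_.summable_nat_add_iff (f := fun k => a k * x ^ k) n).2 hsx
      apply (h1.mul_right ((x ^ n)⁻¹)).congr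
      intro i
      rw [pow_add]
      field_simp
    have htail2 : ∑' i, a (i + n) * x ^ i = 0 := by
      have he : ∑' i, a (i + n) * x ^ (i + n) = (∑' i, a (i + n) * x ^ i) * x ^ n := by
        rw [← tsum_mul_right]
        apply tsum_congr; intro i; rw [pow_add]; ring
      rw [he] at htail
      have hxn : (x:ℝ) ^ n ≠ 0 := by positivity
      exact (mul_eq_zero.1 htail).resolve_right hxn
    have hzeroadd := Summable.tsum_eq_zero_add hsx2
    rw [htail2] at hzeroadd
    have han : a n = - ∑' i, a (i + 1 + n) * x ^ (i + 1) := by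
      have h00 : a (0 + n) * x ^ 0 = a n := by simp
      rw [h00] at hzeroadd
      linarith [hzeroadd]
    have hbnd : ∀ i : ℕ, |a (i + 1 + n) * x ^ (i + 1)| ≤ (x/(1/16)) * (|a (i + 1 + n)| * (1/16:ℝ) ^ (i + 1)) := by
      intro i
      rw [abs_mul, abs_of_pos (by positivity : (0:ℝ) < x ^ (i+1))]
      have hxi : x ^ (i + 1) ≤ (x/(1/16)) * (1/16:ℝ) ^ (i+1) := by
        have h1 : x ^ (i+1) = x * x ^ i := by rw [pow_succ]; ring
        have h2 : x ^ i ≤ (1/16:ℝ) ^ i := pow_le_pow_left₀ (le_of_lt hx) (le_of_lt hxρ) i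
        have h3 : (x/(1/16)) * (1/16:ℝ) ^ (i+1) = x * (1/16:ℝ) ^ i := by
          rw [pow_succ]; ring
        rw [h1, h3]
        exact mul_le_mul_of_nonneg_left h2 (le_of_lt hx)
      calc |a (i+1+n)| * x ^ (i+1) ≤ |a (i+1+n)| * ((x/(1/16)) * (1/16:ℝ) ^ (i+1)) :=
            mul_le_mul_of_nonneg_left hxi (abs_nonneg _)
        _ = (x/(1/16)) * (|a (i+1+n)| * (1/16:ℝ) ^ (i+1)) := by ring
    have hsumbnd : Summable (fun i => (x/(1/16)) * (|a (i + 1 + n)| * (1/16:ℝ) ^ (i + 1))) :=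
      hCsum.mul_left _
    have habs2 : Summable (fun i => |a (i + 1 + n) * x ^ (i + 1)|) :=
      Summable.of_nonneg_of_le (fun i => abs_nonneg _) hbnd hsumbnd
    have hbnd2 : ∀ i : ℕ, |a (i + 1 + n)| * |x| ^ (i + 1) ≤ (x/(1/16)) * (|a (i + 1 + n)| * (1/16:ℝ) ^ (i + 1)) := by
      intro i
      have h := hbnd i
      rwa [abs_mul, abs_pow] at h
    have habs3 : Summable (fun i => |a (i + 1 + n)| * |x| ^ (i + 1)) := by
      apply habs2.congr
      intro i
      rw [abs_mul, abs_pow]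
    have h1 : |a n| ≤ ∑' i, (x/(1/16)) * (|a (i + 1 + n)| * (1/16:ℝ) ^ (i + 1)) := by
      rw [han, abs_neg]
      calc |∑' i, a (i + 1 + n) * x ^ (i + 1)|
          ≤ ∑' i, |a (i + 1 + n)| * |x| ^ (i + 1) := by
            simpa [Real.norm_eq_abs, norm_mul, norm_pow] using
              norm_tsum_le_tsum_norm (f := fun i => a (i + 1 + n) * x ^ (i + 1))
                (by simpa [Real.norm_eq_abs, abs_mul, abs_pow] using habs2)
        _ ≤ ∑' i, (x/(1/16)) * (|a (i + 1 + n)| * (1/16:ℝ) ^ (i + 1)) :=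
            Summable.tsum_le_tsum hbnd2 habs3 hsumbnd
    rwa [tsum_mul_left] at h1
  have habs : |a n| ≤ 0 := by
    apply le_of_forall_pos_le_add
    intro ε hε
    set x : ℝ := min (1/32) ((1/16) * ε / (C+1)) with hxdef
    have hx : 0 < x := by
      apply lt_min (by norm_num)
      positivity
    have hxρ : x < 1/16 := by
      calc x ≤ 1/32 := min_le_left _ _
        _ < 1/16 := by norm_num
    have hkey := key x hx hxρ
    have h2 : (x / (1/16)) * C ≤ ε := by
      have h3 : x ≤ (1/16) * ε / (C+1) := min_le_right _ _
      have h4 : (x / (1/16)) * C ≤ (((1/16) * ε / (C+1)) / (1/16)) * C := by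
        apply mul_le_mul_of_nonneg_right _ hC0
        exact (div_le_div_iff_of_pos_right (by norm_num)).2 h3
      have hC1 : C + 1 ≠ 0 := by positivity
      have h5 : (((1/16:ℝ) * ε / (C+1)) / (1/16)) * C = ε * (C/(C+1)) := by
        field_simp
      have h6 : ε * (C/(C+1)) ≤ ε := by
        apply mul_le_of_le_one_right (le_of_lt hε)
        rw [div_le_one (by positivity)]
        linarith
      linarith
    linarith
  have hnn := abs_nonneg (a n)
  exact abs_eq_zero.1 (le_antisymm habs hnn)

open Finset Real

lemma aux_texp (D : ℕ) (t : ℝ) (ht : 0 ≤ t) :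
    t ^ D * Real.exp (-t) ≤ 2 ^ D * (D.factorial : ℝ) * Real.exp (-(t/2)) := by
  have h1 : (t/2) ^ D / (D.factorial : ℝ) ≤ Real.exp (t/2) :=
    Real.pow_div_factorial_le_exp (t/2) (by linarith) D
  have hD : (0:ℝ) < (D.factorial : ℝ) := by positivity
  have h2 : t ^ D ≤ 2 ^ D * (D.factorial : ℝ) * Real.exp (t/2) := by
    have h3 : (t/2) ^ D = t ^ D / 2 ^ D := by rw [div_pow]
    rw [h3] at h1
    have h4 : t ^ D / 2 ^ D / (D.factorial : ℝ) * (2 ^ D * (D.factorial:ℝ)) ≤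
        Real.exp (t/2) * (2 ^ D * (D.factorial:ℝ)) :=
      mul_le_mul_of_nonneg_right h1 (by positivity)
    have h5 : t ^ D / 2 ^ D / (D.factorial : ℝ) * (2 ^ D * (D.factorial:ℝ)) = t ^ D := by
      field_simp
    rw [h5] at h4; linarith
  calc t ^ D * Real.exp (-t) ≤ (2 ^ D * (D.factorial : ℝ) * Real.exp (t/2)) * Real.exp (-t) :=
        mul_le_mul_of_nonneg_right h2 (le_of_lt (Real.exp_pos _))
    _ = 2 ^ D * (D.factorial : ℝ) * Real.exp (-(t/2)) := by
        rw [mul_assoc, ← Real.exp_add]; ring_nf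

lemma aux_geom (u : ℝ) (hu0 : 0 < u) (hu1 : u ≤ 1) :
    Real.exp (-u) < 1 ∧ (1 - Real.exp (-u))⁻¹ ≤ 2 / u := by
  have h1 : Real.exp (-u) < 1 := by
    rw [Real.exp_lt_one_iff]; linarith
  refine ⟨h1, ?_⟩
  have h2 : u + 1 ≤ Real.exp u := Real.add_one_le_exp u
  have h3 : Real.exp (-u) ≤ (1 + u)⁻¹ := by
    rw [Real.exp_neg]
    apply inv_anti₀ (by linarith) (by linarith)
  have h4 : u / 2 ≤ 1 - Real.exp (-u) := by
    have h5 : 1 - (1+u)⁻¹ = u / (1+u) := by field_simp; ring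
    have h6 : u / (1+u) ≥ u / 2 := by
      apply div_le_div_of_nonneg_left (le_of_lt hu0) (by linarith) (by linarith)
    nlinarith [h3]
  have h7 : 0 < 1 - Real.exp (-u) := by linarith
  rw [inv_eq_one_div]
  calc (1:ℝ) / (1 - Real.exp (-u)) ≤ 1 / (u/2) := by
        apply div_le_div_of_nonneg_left (by norm_num) (by linarith) h4
    _ = 2 / u := by field_simp

lemma aux_prod_shift (D : ℕ) (m : ℕ) :
    (∏ i ∈ range D, ((m:ℝ) + 1 + i)) * m = (∏ i ∈ range D, ((m:ℝ) + i)) * ((m:ℝ) + D) := by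
  have h1 : ∏ i ∈ range D, ((m:ℝ) + 1 + i) = ∏ i ∈ range D, ((m:ℝ) + ((i:ℕ) + 1 : ℕ)) := by
    apply Finset.prod_congr rfl
    intro i _
    push_cast
    ring
  have h2 := Finset.prod_range_succ' (fun i : ℕ => (m:ℝ) + i) D
  have h3 := Finset.prod_range_succ (fun i : ℕ => (m:ℝ) + i) D
  simp only [Nat.cast_zero, add_zero] at h2
  rw [h1, ← h2, h3]

set_option maxHeartbeats 1000000 in
/-- The Taylor coefficients of `p(z) = exp(∑ d_k z^k / k)` with
`0 < d⁻ ≤ d_k ≤ d⁺` are positive, and `p_n ≥ K(d⁻,d⁺) · p(e^{-1/n}) / n` for `n ≥ 1`. -/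
theorem stmt_3 (dm dp : ℝ) (hdm : 0 < dm) (hdp : dm ≤ dp) :
    ∃ K : ℝ, 0 < K ∧
      ∀ (d : ℕ → ℝ), (∀ k : ℕ, 1 ≤ k → dm ≤ d k ∧ d k ≤ dp) →
      ∀ (p : ℕ → ℝ),
        (∀ x : ℝ, 0 ≤ x → x < 1 →
          HasSum (fun n => p n * x ^ n)
            (Real.exp (∑' k : ℕ, d (k + 1) * x ^ (k + 1) / ((k : ℝ) + 1)))) →
        (∀ n : ℕ, 0 < p n) ∧
        ∀ n : ℕ, 1 ≤ n →
          K * Real.exp (∑' k : ℕ,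
              d (k + 1) * Real.exp (-1 / (n : ℝ)) ^ (k + 1) / ((k : ℝ) + 1)) / (n : ℝ)
            ≤ p n := by
  have hdp0 : 0 < dp := lt_of_lt_of_le hdm hdp
  set D : ℕ := ⌈dp⌉₊ with hDdef
  have hD1 : 1 ≤ D := Nat.ceil_pos.2 hdp0
  have hdpD : dp ≤ (D:ℝ) := Nat.le_ceil dp
  set C1 : ℝ := dp * ((D:ℝ)+1)^D * 2^D * (D.factorial : ℝ) with hC1def
  have hC1pos : 0 < C1 := by
    apply mul_pos (mul_pos (mul_pos hdp0 (by positivity)) (by positivity))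
    positivity
  refine ⟨dm / (1 + 4*C1), div_pos hdm (by linarith), ?_⟩
  intro d hd p hp
  have hd1 : ∀ k : ℕ, dm ≤ d (k+1) := fun k => (hd (k+1) (by omega)).1
  have hd2 : ∀ k : ℕ, d (k+1) ≤ dp := fun k => (hd (k+1) (by omega)).2
  have hd0 : ∀ k : ℕ, 0 < d (k+1) := fun k => lt_of_lt_of_le hdm (hd1 k)
  have hdabs : ∀ k : ℕ, |d (k+1)| ≤ dp := fun k => by
    rw [abs_of_pos (hd0 k)]; exact hd2 k
  -- p 0 = 1
  have hp0 : p 0 = 1 := by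
    have h := hp 0 le_rfl (by norm_num)
    have h1 : (∑' k : ℕ, d (k+1) * (0:ℝ)^(k+1) / ((k:ℝ)+1)) = 0 := by
      convert tsum_zero with k
      simp
    rw [h1, Real.exp_zero] at h
    have h2 : HasSum (fun n => p n * (0:ℝ)^n) (p 0) := by
      have := hasSum_single (f := fun n => p n * (0:ℝ)^n) 0 (fun b hb => by
        simp [zero_pow hb])
      simpa using this
    have := h2.unique h
    simpa using this
  -- global coefficient bound
  obtain ⟨M, hM1, hM⟩ : ∃ M : ℝ, 1 ≤ M ∧ ∀ n, |p n| ≤ M * 2^n := by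
    have hsum := (hp (1/2) (by norm_num) (by norm_num)).summable
    have htend : Filter.Tendsto (fun n => |p n * (1/2:ℝ)^n|) Filter.atTop (nhds 0) := by
      simpa using hsum.tendsto_atTop_zero.abs
    obtain ⟨M₀, hM₀⟩ := htend.bddAbove_range
    rw [mem_upperBounds] at *
    refine ⟨max M₀ 1, le_max_right _ _, fun n => ?_⟩
    have h1 : |p n * (1/2:ℝ)^n| ≤ M₀ := hM₀ _ (Set.mem_range_self n)
    have h2 : |p n| * (1/2:ℝ)^n ≤ max M₀ 1 := by
      rw [abs_mul, abs_of_pos (by positivity : (0:ℝ) < (1/2:ℝ)^n)] at h1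
      exact le_trans h1 (le_max_left _ _)
    have h3 : |p n| * (1/2:ℝ)^n * 2^n ≤ (max M₀ 1) * 2^n :=
      mul_le_mul_of_nonneg_right h2 (by positivity)
    calc |p n| = |p n| * (1/2:ℝ)^n * 2^n := by
          rw [mul_assoc, ← mul_pow]; norm_num
      _ ≤ (max M₀ 1) * 2^n := h3
  have hM0 : 0 < M := lt_of_lt_of_le one_pos hM1
  -- norm-summability of coefficient series
  have hsum_px : ∀ x : ℝ, |x| < 1/2 → Summable (fun n => ‖p n * x ^ n‖) := by
    intro x hx
    have hb : ∀ n : ℕ, ‖p n * x ^ n‖ ≤ M * |2*x| ^ n := by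
      intro n
      rw [norm_mul, norm_pow, Real.norm_eq_abs, Real.norm_eq_abs]
      calc |p n| * |x|^n ≤ (M * 2^n) * |x|^n :=
            mul_le_mul_of_nonneg_right (hM n) (by positivity)
        _ = M * |2*x|^n := by rw [abs_mul, mul_pow, abs_two]; ring
    apply Summable.of_nonneg_of_le (fun n => norm_nonneg _) hb
    apply Summable.mul_left
    apply summable_geometric_of_lt_one (abs_nonneg _)
    rw [abs_mul, abs_two]
    calc 2 * |x| < 2 * (1/2) := by
          apply mul_lt_mul_of_pos_left hx (by norm_num)
      _ = 1 := by norm_num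
  -- the open set for differentiation
  have htopen : IsOpen (Metric.ball (0:ℝ) (1/8)) := Metric.isOpen_ball
  have htconn : IsPreconnected (Metric.ball (0:ℝ) (1/8)) :=
    (convex_ball (0:ℝ) (1/8)).isPreconnected
  have hmem : ∀ y : ℝ, y ∈ Metric.ball (0:ℝ) (1/8) ↔ |y| < 1/8 := by
    intro y; rw [Metric.mem_ball, Real.dist_eq, sub_zero]
  have h0t : (0:ℝ) ∈ Metric.ball (0:ℝ) (1/8) := by rw [hmem]; norm_num
  -- derivative of the p-series
  have hu : Summable (fun n : ℕ => 8 * M * ((n:ℝ) * (1/4:ℝ)^n)) := by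
    apply Summable.mul_left
    have h := summable_pow_mul_geometric_of_norm_lt_one (R := ℝ) 1
      (r := 1/4) (by norm_num [Real.norm_eq_abs])
    apply h.congr; intro n; rw [pow_one]
  have hgderiv : ∀ (n:ℕ) (y:ℝ), HasDerivAt (fun z => p n * z ^ n) (p n * ((n:ℝ) * y^(n-1))) y :=
    fun n y => (hasDerivAt_pow n y).const_mul (p n)
  have hgbound : ∀ (n:ℕ) (y:ℝ), y ∈ Metric.ball (0:ℝ) (1/8) →
      ‖p n * ((n:ℝ) * y^(n-1))‖ ≤ 8 * M * ((n:ℝ)*(1/4:ℝ)^n) := by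
    intro n y hy
    rw [hmem] at hy
    match n with
    | 0 => simp
    | (m+1) =>
      rw [norm_mul, norm_mul, norm_pow, Real.norm_eq_abs, Real.norm_eq_abs, Real.norm_eq_abs]
      have e0 : (m+1) - 1 = m := rfl
      rw [e0]
      have h1 : |y| ^ m ≤ (1/8:ℝ)^m := pow_le_pow_left₀ (abs_nonneg y) (le_of_lt hy) m
      have h2 : |((m:ℝ)+1)| = (m:ℝ)+1 := abs_of_pos (by positivity)
      push_cast
      rw [h2]
      have h3 : |p (m+1)| * (((m:ℝ)+1) * |y|^m) ≤ (M * 2^(m+1)) * (((m:ℝ)+1) * (1/8:ℝ)^m) := by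
        apply mul_le_mul (hM (m+1)) _ (by positivity) (by positivity)
        exact mul_le_mul_of_nonneg_left h1 (by positivity)
      have h4 : (M * 2^(m+1)) * (((m:ℝ)+1) * (1/8:ℝ)^m) = 8 * M * (((m:ℝ)+1)*(1/4:ℝ)^(m+1)) := by
        have e1 : (2:ℝ)^(m+1) * (1/8:ℝ)^m = 8 * (1/4:ℝ)^(m+1) := by
          have e2 : (2:ℝ)^(m+1) * (1/8:ℝ)^(m+1) = (1/4:ℝ)^(m+1) := by
            rw [← mul_pow]; norm_num
          have e3 : (1/8:ℝ)^(m+1) = (1/8:ℝ)^m * (1/8) := pow_succ _ _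
          rw [e3] at e2
          linear_combination 8 * e2
        linear_combination (M * ((m:ℝ)+1)) * e1
      linarith [h3, h4.le, h4.ge]
  have hsum0 : Summable (fun n => p n * (0:ℝ)^n) := by
    apply summable_of_ne_finset_zero (s := {0})
    intro b hb
    have hb0 : b ≠ 0 := by simpa using hb
    simp [zero_pow hb0]
  have hhd : ∀ x ∈ Metric.ball (0:ℝ) (1/8),
      HasDerivAt (fun y => ∑' n, p n * y ^ n) (∑' n, p n * ((n:ℝ) * x^(n-1))) x := by
    intro x hx
    exact hasDerivAt_tsum_of_isPreconnected hu htopen htconn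
      (fun n y _ => hgderiv n y) hgbound h0t hsum0 hx
  -- derivative of the exponent series
  have hGderiv : ∀ (k:ℕ) (y:ℝ),
      HasDerivAt (fun z => d (k+1) * z ^ (k+1) / ((k:ℝ)+1)) (d (k+1) * y ^ k) y := by
    intro k y
    have h1 := ((hasDerivAt_pow (k+1) y).const_mul (d (k+1))).div_const ((k:ℝ)+1)
    refine h1.congr_deriv ?_
    have e0 : (k+1) - 1 = k := rfl
    rw [e0]
    push_cast
    have hk : ((k:ℝ)+1) ≠ 0 := by positivity
    field_simp
  have hGbound : ∀ (k:ℕ) (y:ℝ), y ∈ Metric.ball (0:ℝ) (1/8) →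
      ‖d (k+1) * y ^ k‖ ≤ dp * (1/8:ℝ)^k := by
    intro k y hy
    rw [hmem] at hy
    rw [norm_mul, norm_pow, Real.norm_eq_abs, Real.norm_eq_abs]
    apply mul_le_mul (hdabs k) (pow_le_pow_left₀ (abs_nonneg y) (le_of_lt hy) k)
      (by positivity) (le_of_lt hdp0)
  have huG : Summable (fun k : ℕ => dp * (1/8:ℝ)^k) := by
    apply Summable.mul_left
    apply summable_geometric_of_lt_one (by norm_num) (by norm_num)
  have hG0 : Summable (fun k : ℕ => d (k+1) * (0:ℝ)^(k+1) / ((k:ℝ)+1)) := by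
    apply summable_zero.congr
    intro k
    simp
  have hGd : ∀ x ∈ Metric.ball (0:ℝ) (1/8),
      HasDerivAt (fun y => ∑' k : ℕ, d (k+1) * y^(k+1) / ((k:ℝ)+1)) (∑' k : ℕ, d (k+1) * x^k) x := by
    intro x hx
    exact hasDerivAt_tsum_of_isPreconnected huG htopen htconn
      (fun k y _ => hGderiv k y) hGbound h0t hG0 hx
  -- the recurrence
  have hrec : ∀ n : ℕ, ((n:ℝ)+1) * p (n+1) = ∑ k ∈ range (n+1), d (k+1) * p (n-k) := by
    have hzero := aux_coeff_zero
      (fun n => ((n:ℝ)+1) * p (n+1) - ∑ k ∈ range (n+1), d (k+1) * p (n-k))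
      (M * (2 + dp)) ?_ ?_
    · intro n
      have := hzero n
      have h := sub_eq_zero.1 this
      exact h
    · -- coefficient bound
      intro n
      have h1 : |((n:ℝ)+1) * p (n+1)| ≤ ((n:ℝ)+1) * (M * 2^(n+1)) := by
        rw [abs_mul, abs_of_pos (by positivity : (0:ℝ) < (n:ℝ)+1)]
        exact mul_le_mul_of_nonneg_left (hM (n+1)) (by positivity)
      have h2 : |∑ k ∈ range (n+1), d (k+1) * p (n-k)| ≤ ((n:ℝ)+1) * (dp * (M * 2^n)) := by
        calc |∑ k ∈ range (n+1), d (k+1) * p (n-k)|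
            ≤ ∑ k ∈ range (n+1), |d (k+1) * p (n-k)| := Finset.abs_sum_le_sum_abs _ _
          _ ≤ ∑ _k ∈ range (n+1), dp * (M * 2^n) := by
              apply Finset.sum_le_sum
              intro k _
              rw [abs_mul]
              apply mul_le_mul (hdabs k) _ (abs_nonneg _) (le_of_lt hdp0)
              calc |p (n-k)| ≤ M * 2^(n-k) := hM (n-k)
                _ ≤ M * 2^n := by
                    apply mul_le_mul_of_nonneg_left _ (le_of_lt hM0)
                    apply pow_le_pow_right₀ (by norm_num) (by omega)
          _ = ((n:ℝ)+1) * (dp * (M * 2^n)) := by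
              rw [Finset.sum_const, Finset.card_range]
              push_cast
              ring
      calc |((n:ℝ)+1) * p (n+1) - ∑ k ∈ range (n+1), d (k+1) * p (n-k)|
          ≤ |((n:ℝ)+1) * p (n+1)| + |∑ k ∈ range (n+1), d (k+1) * p (n-k)| := abs_sub _ _
        _ ≤ ((n:ℝ)+1) * (M * 2^(n+1)) + ((n:ℝ)+1) * (dp * (M * 2^n)) := by linarith
        _ = M * (2 + dp) * ((n:ℝ)+1) * 2^n := by rw [pow_succ]; ring
    · -- the series identity
      intro x hx0 hx8
      have hxabs : |x| < 1/8 := by rw [abs_of_pos hx0]; linarith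
      have hxt : x ∈ Metric.ball (0:ℝ) (1/8) := by rw [hmem]; exact hxabs
      have hA := hhd x hxt
      have hev : (fun y => Real.exp (∑' k : ℕ, d (k+1) * y^(k+1) / ((k:ℝ)+1)))
          =ᶠ[nhds x] (fun y => ∑' n, p n * y ^ n) := by
        filter_upwards [isOpen_Ioo.mem_nhds (show x ∈ Set.Ioo (0:ℝ) (1/8) from ⟨hx0, hx8⟩)]
          with y hy
        exact ((hp y (le_of_lt hy.1) (by linarith [hy.2])).tsum_eq).symm
      have hA' : HasDerivAt (fun y => Real.exp (∑' k : ℕ, d (k+1) * y^(k+1) / ((k:ℝ)+1)))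
          (∑' n, p n * ((n:ℝ) * x^(n-1))) x := hA.congr_of_eventuallyEq hev
      have hB : HasDerivAt (fun y => Real.exp (∑' k : ℕ, d (k+1) * y^(k+1) / ((k:ℝ)+1)))
          ((∑' k : ℕ, d (k+1) * x^k) * Real.exp (∑' k : ℕ, d (k+1) * x^(k+1) / ((k:ℝ)+1))) x := by
        have := (hGd x hxt).exp
        convert this using 1
        ring
      have huniq := hA'.unique hB
      have hexp_eq : Real.exp (∑' k : ℕ, d (k+1) * x^(k+1) / ((k:ℝ)+1)) = ∑' n, p n * x ^ n :=
        ((hp x (le_of_lt hx0) (by linarith)).tsum_eq).symm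
      -- Cauchy product
      have hdx : Summable (fun k : ℕ => ‖d (k+1) * x ^ k‖) := by
        apply Summable.of_nonneg_of_le (fun k => norm_nonneg _)
          (fun k => hGbound k x hxt) huG
      have hpx : Summable (fun n => ‖p n * x ^ n‖) := hsum_px x (by linarith [hxabs])
      have hcauchy := tsum_mul_tsum_eq_tsum_sum_range_of_summable_norm hdx hpx
      have e2 : ∀ n:ℕ, ∑ k ∈ range (n+1), (d (k+1) * x^k) * (p (n-k) * x^(n-k))
          = (∑ k ∈ range (n+1), d (k+1) * p (n-k)) * x ^ n := by
        intro n
        rw [Finset.sum_mul]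
        apply Finset.sum_congr rfl
        intro k hk
        have hkn : k ≤ n := Nat.lt_succ_iff.1 (Finset.mem_range.1 hk)
        have hxx : x ^ k * x ^ (n-k) = x ^ n := by
          rw [← pow_add]; congr 1; omega
        calc (d (k+1) * x^k) * (p (n-k) * x^(n-k)) = d (k+1) * p (n-k) * (x^k * x^(n-k)) := by ring
          _ = d (k+1) * p (n-k) * x ^ n := by rw [hxx]
      -- reorganize the derivative series
      have hsumA : Summable (fun n => p n * ((n:ℝ) * x ^ (n-1))) :=
        Summable.of_norm_bounded hu (fun n => hgbound n x hxt)
      have hshift := Summable.tsum_eq_zero_add hsumA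
      have e1 : ∑' n, p n * ((n:ℝ) * x ^ (n-1)) = ∑' n : ℕ, (((n:ℝ)+1) * p (n+1)) * x ^ n := by
        rw [hshift]
        have h00 : p 0 * (((0:ℕ):ℝ) * x ^ (0-1)) = 0 := by simp
        rw [h00, zero_add]
        apply tsum_congr
        intro n
        have he : (n+1) - 1 = n := rfl
        rw [he]
        push_cast
        ring
      -- summabilities for subtraction
      have hsumA' : Summable (fun n : ℕ => (((n:ℝ)+1) * p (n+1)) * x ^ n) := by
        have h1 : Summable (fun n => p (n+1) * (((n+1:ℕ):ℝ) * x ^ ((n+1)-1))) :=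
          (_root_.summable_nat_add_iff (f := fun n => p n * ((n:ℝ) * x ^ (n-1))) 1).2 hsumA
        apply h1.congr
        intro n
        have he : (n+1) - 1 = n := rfl
        rw [he]
        push_cast
        ring
      have hsumB : Summable (fun n => (∑ k ∈ range (n+1), d (k+1) * p (n-k)) * x ^ n) := by
        have h1 := (summable_norm_sum_mul_range_of_summable_norm hdx hpx).of_norm
        apply h1.congr
        intro n
        exact e2 n
      -- conclude
      have hfinal : ∑' n : ℕ, (((n:ℝ)+1) * p (n+1)) * x ^ n
          = ∑' n, (∑ k ∈ range (n+1), d (k+1) * p (n-k)) * x ^ n := by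
        rw [← e1, huniq, hexp_eq, hcauchy]
        apply tsum_congr
        intro n
        exact e2 n
      have hsub := Summable.tsum_sub hsumA' hsumB
      rw [hfinal, sub_self] at hsub
      calc ∑' n : ℕ, ((((n:ℝ)+1) * p (n+1) - ∑ k ∈ range (n+1), d (k+1) * p (n-k)) * x ^ n)
          = ∑' n : ℕ, ((((n:ℝ)+1) * p (n+1)) * x ^ n - (∑ k ∈ range (n+1), d (k+1) * p (n-k)) * x ^ n) := by
            apply tsum_congr; intro n; ring
        _ = 0 := hsub
  -- positivity of coefficients
  have hpos : ∀ n, 0 < p n := by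
    intro n
    induction n using Nat.strong_induction_on with
    | _ n ih =>
    match n with
    | 0 => rw [hp0]; norm_num
    | (m+1) =>
      have h := hrec m
      have hsum : 0 < ∑ k ∈ range (m+1), d (k+1) * p (m-k) := by
        apply Finset.sum_pos
        · intro k hk
          exact mul_pos (hd0 k) (ih (m-k) (by omega))
        · exact Finset.nonempty_range_add_one
      rw [← h] at hsum
      nlinarith [hsum, (show (0:ℝ) < (m:ℝ)+1 by positivity)]
  refine ⟨hpos, ?_⟩
  -- partial sums
  set S : ℕ → ℝ := fun n => ∑ j ∈ range n, p j with hSdef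
  have hSpos : ∀ n : ℕ, 1 ≤ n → 0 < S n := by
    intro n hn
    apply Finset.sum_pos (fun j _ => hpos j)
    rw [Finset.nonempty_range_iff]
    omega
  have hreflect : ∀ m : ℕ, ∑ k ∈ range (m+1), p (m-k) = S (m+1) := by
    intro m
    calc ∑ k ∈ range (m+1), p (m-k) = ∑ k ∈ range (m+1), p ((m+1)-1-k) := by
          apply Finset.sum_congr rfl; intro k hk; congr 1
      _ = ∑ j ∈ range (m+1), p j := Finset.sum_range_reflect p (m+1)
  have hlow : ∀ n : ℕ, 1 ≤ n → dm * S n ≤ (n:ℝ) * p n := by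
    intro n hn
    obtain ⟨m, rfl⟩ : ∃ m, n = m + 1 := ⟨n-1, by omega⟩
    have h := hrec m
    have h1 : ∑ k ∈ range (m+1), dm * p (m-k) ≤ ∑ k ∈ range (m+1), d (k+1) * p (m-k) :=
      Finset.sum_le_sum (fun k _ => mul_le_mul_of_nonneg_right (hd1 k) (hpos _).le)
    have h3 : dm * S (m+1) = ∑ k ∈ range (m+1), dm * p (m-k) := by
      rw [← Finset.mul_sum, hreflect m]
    push_cast
    rw [h3]
    linarith [h, h1]
  have hhigh : ∀ n : ℕ, 1 ≤ n → (n:ℝ) * p n ≤ dp * S n := by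
    intro n hn
    obtain ⟨m, rfl⟩ : ∃ m, n = m + 1 := ⟨n-1, by omega⟩
    have h := hrec m
    have h1 : ∑ k ∈ range (m+1), d (k+1) * p (m-k) ≤ ∑ k ∈ range (m+1), dp * p (m-k) :=
      Finset.sum_le_sum (fun k _ => mul_le_mul_of_nonneg_right (hd2 k) (hpos _).le)
    have h3 : dp * S (m+1) = ∑ k ∈ range (m+1), dp * p (m-k) := by
      rw [← Finset.mul_sum, hreflect m]
    push_cast
    rw [h3]
    linarith [h, h1]
  -- growth of partial sums
  set A : ℕ → ℝ := fun m => ∏ i ∈ range D, ((m:ℝ) + i) with hAdef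
  have hApos : ∀ m : ℕ, 1 ≤ m → 0 < A m := by
    intro m hm
    apply Finset.prod_pos
    intro i _
    have h1 : (1:ℝ) ≤ (m:ℝ) := by exact_mod_cast hm
    have h2 : (0:ℝ) ≤ (i:ℝ) := Nat.cast_nonneg i
    linarith
  have hAshift : ∀ m : ℕ, A (m+1) * m = A m * ((m:ℝ) + D) := by
    intro m
    have h := aux_prod_shift D m
    simp only [hAdef]
    have e : ∏ i ∈ range D, (((m+1:ℕ):ℝ) + i) = ∏ i ∈ range D, ((m:ℝ) + 1 + i) := by
      apply Finset.prod_congr rfl; intro i _; push_cast; ring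
    rw [e]
    exact h
  have hgrow : ∀ n : ℕ, 1 ≤ n → ∀ m, n ≤ m → S m * A n ≤ S n * A m := by
    intro n hn m hm
    induction m, hm using Nat.le_induction with
    | base => exact le_refl _
    | succ m hm ih =>
      have hm1 : 1 ≤ m := le_trans hn hm
      have hmpos : (0:ℝ) < (m:ℝ) := by exact_mod_cast hm1
      have hSm : 0 ≤ S m := (hSpos m hm1).le
      have h1 : (m:ℝ) * S (m+1) ≤ ((m:ℝ) + D) * S m := by
        have hS : S (m+1) = S m + p m := Finset.sum_range_succ p m
        have h2 := hhigh m hm1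
        have h4 : dp * S m ≤ (D:ℝ) * S m := mul_le_mul_of_nonneg_right hdpD hSm
        rw [hS]
        nlinarith [h2, h4]
      have hAm : 0 < A m := hApos m hm1
      have hAn : 0 ≤ A n := (hApos n hn).le
      have hSn : 0 ≤ S n := (hSpos n hn).le
      have hkey : (m:ℝ) * (S (m+1) * A n) ≤ (m:ℝ) * (S n * A (m+1)) := by
        calc (m:ℝ) * (S (m+1) * A n) = ((m:ℝ) * S (m+1)) * A n := by ring
          _ ≤ (((m:ℝ)+D) * S m) * A n := mul_le_mul_of_nonneg_right h1 hAn
          _ = ((m:ℝ)+D) * (S m * A n) := by ring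
          _ ≤ ((m:ℝ)+D) * (S n * A m) := mul_le_mul_of_nonneg_left ih (by positivity)
          _ = S n * (A m * ((m:ℝ)+D)) := by ring
          _ = S n * (A (m+1) * m) := by rw [← hAshift m]
          _ = (m:ℝ) * (S n * A (m+1)) := by ring
      exact le_of_mul_le_mul_left hkey hmpos
  have hAub : ∀ m : ℕ, A m ≤ ((m:ℝ) + D)^D := by
    intro m
    calc A m ≤ ∏ _i ∈ range D, ((m:ℝ) + D) := by
          apply Finset.prod_le_prod
          · intro i _; positivity
          · intro i hi
            have h1 : (i:ℝ) ≤ (D:ℝ) := by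
              exact_mod_cast le_of_lt (Finset.mem_range.1 hi)
            linarith
      _ = ((m:ℝ)+D)^D := by rw [Finset.prod_const, Finset.card_range]
  have hAlb : ∀ n : ℕ, ((n:ℝ))^D ≤ A n := by
    intro n
    calc ((n:ℝ))^D = ∏ _i ∈ range D, (n:ℝ) := by rw [Finset.prod_const, Finset.card_range]
      _ ≤ A n := by
          apply Finset.prod_le_prod
          · intro i _; positivity
          · intro i _
            have h2 : (0:ℝ) ≤ (i:ℝ) := Nat.cast_nonneg i
            linarith
  -- final estimate
  intro n hn
  have hn0 : (0:ℝ) < (n:ℝ) := by exact_mod_cast hn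
  have hn1 : (1:ℝ) ≤ (n:ℝ) := by exact_mod_cast hn
  set x : ℝ := Real.exp (-1 / (n:ℝ)) with hxdef
  have hx0 : 0 ≤ x := (Real.exp_pos _).le
  have hx1 : x < 1 := by
    rw [hxdef, Real.exp_lt_one_iff]
    rw [neg_div]
    have : (0:ℝ) < 1 / (n:ℝ) := by positivity
    linarith
  have hsum := hp x hx0 hx1
  set E : ℝ := Real.exp (∑' k : ℕ, d (k+1) * x^(k+1) / ((k:ℝ)+1)) with hEdef
  have hEeq : E = ∑' k, p k * x ^ k := (hsum.tsum_eq).symm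
  have hSn : 0 < S n := hSpos n hn
  -- head bound
  have hhead : ∑ k ∈ range n, p k * x ^ k ≤ S n := by
    apply Finset.sum_le_sum
    intro k _
    calc p k * x ^ k ≤ p k * 1 := by
          apply mul_le_mul_of_nonneg_left _ (hpos k).le
          exact pow_le_one₀ hx0 hx1.le
      _ = p k := mul_one _
  -- geometric data
  have hgeo := aux_geom (1/(2*(n:ℝ))) (by positivity) (by
    rw [div_le_one (by positivity)]
    linarith)
  set r : ℝ := Real.exp (-(1/(2*(n:ℝ)))) with hrdef
  have hr0 : 0 ≤ r := (Real.exp_pos _).le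
  have hr1 : r < 1 := hgeo.1
  -- pointwise tail bound
  have hterm : ∀ j : ℕ, p (j + n) * x ^ (j + n) ≤ (C1 * S n / n) * r ^ j := by
    intro j
    have hmn : n ≤ j + n := by omega
    have hm1 : 1 ≤ j + n := by omega
    have hmpos : (0:ℝ) < ((j+n:ℕ):ℝ) := by exact_mod_cast hm1
    have hmge : (n:ℝ) ≤ ((j+n:ℕ):ℝ) := by exact_mod_cast hmn
    have hxm : x ^ (j+n) = Real.exp (-(((j+n:ℕ):ℝ)/(n:ℝ))) := by
      rw [hxdef, ← Real.exp_nat_mul]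
      congr 1
      field_simp
    have hpm : p (j+n) ≤ dp * S (j+n) / ((j+n:ℕ):ℝ) := by
      rw [le_div_iff₀ hmpos]
      have := hhigh (j+n) hm1
      linarith
    have hSn0 : 0 ≤ S n := hSn.le
    have hSm0 : 0 ≤ S (j+n) := (hSpos (j+n) hm1).le
    have hSmb : S (j+n) * (n:ℝ)^D ≤ S n * (((D:ℝ)+1)^D * ((j+n:ℕ):ℝ)^D) := by
      have h1 := hgrow n hn (j+n) hmn
      have h2 := hAlb n
      have h3 := hAub (j+n)
      have h4 : (((j+n:ℕ):ℝ) + D)^D ≤ ((D:ℝ)+1)^D * ((j+n:ℕ):ℝ)^D := by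
        have h5 : ((j+n:ℕ):ℝ) + D ≤ ((D:ℝ)+1) * ((j+n:ℕ):ℝ) := by
          have h6 : (0:ℝ) ≤ (D:ℝ) := Nat.cast_nonneg D
          nlinarith [hmpos, hmge, hn0]
        calc (((j+n:ℕ):ℝ) + D)^D ≤ (((D:ℝ)+1) * ((j+n:ℕ):ℝ))^D :=
              pow_le_pow_left₀ (by positivity) h5 D
          _ = ((D:ℝ)+1)^D * ((j+n:ℕ):ℝ)^D := mul_pow _ _ _
      calc S (j+n) * (n:ℝ)^D ≤ S (j+n) * A n := mul_le_mul_of_nonneg_left h2 hSm0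
        _ ≤ S n * A (j+n) := h1
        _ ≤ S n * ((((j+n:ℕ):ℝ) + D)^D) := mul_le_mul_of_nonneg_left h3 hSn0
        _ ≤ S n * (((D:ℝ)+1)^D * ((j+n:ℕ):ℝ)^D) := mul_le_mul_of_nonneg_left h4 hSn0
    have htexp := aux_texp D (((j+n:ℕ):ℝ)/(n:ℝ)) (by positivity)
    have hexp2 : Real.exp (-((((j+n:ℕ):ℝ)/(n:ℝ))/2)) ≤ r ^ j := by
      rw [hrdef, ← Real.exp_nat_mul, Real.exp_le_exp]
      have hjm : (j:ℝ) ≤ ((j+n:ℕ):ℝ) := by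
        push_cast
        linarith [hn0]
      rw [div_div]
      have h7 : (j:ℝ) * -(1/(2*(n:ℝ))) = -((j:ℝ)/((n:ℝ)*2)) := by
        ring
      rw [h7]
      apply neg_le_neg
      exact (div_le_div_iff_of_pos_right (by positivity)).2 hjm
    -- main chain
    have hfact : (0:ℝ) < (n:ℝ)^D := by positivity
    calc p (j+n) * x ^ (j+n)
        ≤ (dp * S (j+n) / ((j+n:ℕ):ℝ)) * x ^ (j+n) := by
          apply mul_le_mul_of_nonneg_right hpm (by positivity)
      _ = dp * (S (j+n) * (n:ℝ)^D) * Real.exp (-(((j+n:ℕ):ℝ)/(n:ℝ))) / (((j+n:ℕ):ℝ) * (n:ℝ)^D) := by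
          rw [hxm]
          field_simp
      _ ≤ dp * (S n * (((D:ℝ)+1)^D * ((j+n:ℕ):ℝ)^D)) * Real.exp (-(((j+n:ℕ):ℝ)/(n:ℝ))) / (((j+n:ℕ):ℝ) * (n:ℝ)^D) := by
          apply (div_le_div_iff_of_pos_right (by positivity)).2
          apply mul_le_mul_of_nonneg_right _ (Real.exp_pos _).le
          exact mul_le_mul_of_nonneg_left hSmb (le_of_lt hdp0)
      _ = dp * ((D:ℝ)+1)^D * S n * (((((j+n:ℕ):ℝ)/(n:ℝ)))^D * Real.exp (-(((j+n:ℕ):ℝ)/(n:ℝ)))) / ((j+n:ℕ):ℝ) := by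
          rw [div_pow]
          field_simp
      _ ≤ dp * ((D:ℝ)+1)^D * S n * (2^D * (D.factorial:ℝ) * Real.exp (-((((j+n:ℕ):ℝ)/(n:ℝ))/2))) / ((j+n:ℕ):ℝ) := by
          apply (div_le_div_iff_of_pos_right hmpos).2
          apply mul_le_mul_of_nonneg_left htexp
          exact mul_nonneg (mul_nonneg (le_of_lt hdp0) (by positivity)) hSn0
      _ ≤ dp * ((D:ℝ)+1)^D * S n * (2^D * (D.factorial:ℝ) * Real.exp (-((((j+n:ℕ):ℝ)/(n:ℝ))/2))) / (n:ℝ) := by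
          apply div_le_div_of_nonneg_left _ hn0 hmge
          apply mul_nonneg (mul_nonneg (mul_nonneg (le_of_lt hdp0) (by positivity)) hSn0)
          positivity
      _ = (C1 * S n / (n:ℝ)) * Real.exp (-((((j+n:ℕ):ℝ)/(n:ℝ))/2)) := by
          rw [hC1def]
          field_simp
      _ ≤ (C1 * S n / (n:ℝ)) * r ^ j := by
          apply mul_le_mul_of_nonneg_left hexp2 (by positivity)
  -- tail sum
  have hsumtail : Summable (fun j => p (j+n) * x ^ (j+n)) :=
    (_root_.summable_nat_add_iff (f := fun k => p k * x ^ k) n).2 hsum.summable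
  have hsumgeo : Summable (fun j : ℕ => (C1 * S n / (n:ℝ)) * r ^ j) :=
    (summable_geometric_of_lt_one hr0 hr1).mul_left _
  have hCSn : 0 ≤ C1 * S n / (n:ℝ) := by positivity
  have htail : (∑' j, p (j+n) * x ^ (j+n)) ≤ 4 * C1 * S n := by
    calc (∑' j, p (j+n) * x ^ (j+n)) ≤ ∑' j : ℕ, (C1 * S n / (n:ℝ)) * r ^ j :=
          Summable.tsum_le_tsum hterm hsumtail hsumgeo
      _ = (C1 * S n / (n:ℝ)) * ∑' j : ℕ, r ^ j := tsum_mul_left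
      _ ≤ (C1 * S n / (n:ℝ)) * (4 * (n:ℝ)) := by
          apply mul_le_mul_of_nonneg_left _ hCSn
          rw [tsum_geometric_of_lt_one hr0 hr1]
          calc (1 - r)⁻¹ ≤ 2 / (1/(2*(n:ℝ))) := hgeo.2
            _ = 4 * (n:ℝ) := by field_simp; ring
      _ = 4 * C1 * S n := by field_simp
  -- assemble
  have hE : E ≤ (1 + 4*C1) * S n := by
    rw [hEeq, ← Summable.sum_add_tsum_nat_add n hsum.summable]
    have := htail
    nlinarith [hhead, htail]
  have hfin : dm * S n ≤ (n:ℝ) * p n := hlow n hn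
  have h1C : (0:ℝ) < 1 + 4*C1 := by linarith
  calc dm / (1 + 4*C1) * E / (n:ℝ) ≤ dm / (1 + 4*C1) * ((1 + 4*C1) * S n) / (n:ℝ) := by
        apply (div_le_div_iff_of_pos_right hn0).2
        exact mul_le_mul_of_nonneg_left hE (div_nonneg hdm.le (by linarith))
    _ = dm * S n / (n:ℝ) := by
        field_simp
    _ ≤ ((n:ℝ) * p n) / (n:ℝ) := by
        exact (div_le_div_iff_of_pos_right hn0).2 hfin
    _ = p n := by field_simp
end

section
/- Let p(z) = exp(Σ_{k≥1} (d_k/k) z^k) with 0 < d⁻ ≤ d_k ≤ d⁺. Then for all m ≥ n ≥ 1: (m/n)^{d⁻} e^{-d⁻/n} ≤ p(e^{-1/m})/p(e^{-1/n}) ≤ (m/n)^{d⁺} e^{d⁺/m}. -/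
open Real

private lemma aux1 (t : ℝ) (ht : 0 < t) : 1 - Real.exp (-1 / t) ≤ 1 / t := by
  have h := Real.add_one_le_exp (-1 / t)
  have : (-1 : ℝ) / t = -(1 / t) := by ring
  rw [this] at h ⊢
  linarith

private lemma aux2 (t : ℝ) (ht : 0 < t) : 1 / (t + 1) ≤ 1 - Real.exp (-1 / t) := by
  have h := Real.add_one_le_exp (1 / t)
  have hpos : (0 : ℝ) < 1 / t + 1 := by positivity
  have h2 : Real.exp (-1 / t) ≤ (1 / t + 1)⁻¹ := by
    rw [show (-1 : ℝ) / t = -(1 / t) by ring, Real.exp_neg]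
    exact inv_anti₀ hpos h
  have ht1 : t + 1 ≠ 0 := by positivity
  have h3 : (1 / t + 1)⁻¹ = t / (t + 1) := by
    rw [eq_div_iff ht1]
    field_simp
    ring
  have h4 : t / (t + 1) = 1 - 1 / (t + 1) := by
    rw [eq_sub_iff_add_eq, ← add_div, div_eq_one_iff_eq ht1]
  rw [h3, h4] at h2
  linarith

private lemma aux3 (t : ℝ) (ht : 0 < t) : Real.log ((t + 1) / t) ≤ 1 / t := by
  have h1 : Real.log ((t + 1) / t) ≤ (t + 1) / t - 1 :=
    Real.log_le_sub_one_of_pos (by positivity)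
  have h2 : (t + 1) / t - 1 = 1 / t := by field_simp; ring
  linarith

private lemma L_bounds (a b : ℝ) (ha : 1 ≤ a) (hab : a ≤ b) :
    Real.log (b / a) - 1 / a ≤
      Real.log (1 - Real.exp (-1 / a)) - Real.log (1 - Real.exp (-1 / b)) ∧
    Real.log (1 - Real.exp (-1 / a)) - Real.log (1 - Real.exp (-1 / b)) ≤
      Real.log (b / a) + 1 / b := by
  have ha0 : (0 : ℝ) < a := by linarith
  have hb0 : (0 : ℝ) < b := by linarith
  have hA1 := aux2 a ha0
  have hA2 := aux1 a ha0
  have hB1 := aux2 b hb0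
  have hB2 := aux1 b hb0
  have hApos : (0 : ℝ) < 1 / (a + 1) := by positivity
  have hBpos : (0 : ℝ) < 1 / (b + 1) := by positivity
  have hlow_a : Real.log (1 / (a + 1)) ≤ Real.log (1 - Real.exp (-1 / a)) :=
    Real.log_le_log hApos hA1
  have hup_a : Real.log (1 - Real.exp (-1 / a)) ≤ Real.log (1 / a) :=
    Real.log_le_log (by linarith) hA2
  have hlow_b : Real.log (1 / (b + 1)) ≤ Real.log (1 - Real.exp (-1 / b)) :=
    Real.log_le_log hBpos hB1
  have hup_b : Real.log (1 - Real.exp (-1 / b)) ≤ Real.log (1 / b) :=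
    Real.log_le_log (by linarith) hB2
  have la : Real.log (1 / a) = -Real.log a := by
    rw [one_div, Real.log_inv]
  have lb : Real.log (1 / b) = -Real.log b := by
    rw [one_div, Real.log_inv]
  have la1 : Real.log (1 / (a + 1)) = -Real.log (a + 1) := by
    rw [one_div, Real.log_inv]
  have lb1 : Real.log (1 / (b + 1)) = -Real.log (b + 1) := by
    rw [one_div, Real.log_inv]
  have lba : Real.log (b / a) = Real.log b - Real.log a :=
    Real.log_div (ne_of_gt hb0) (ne_of_gt ha0)
  have hda : Real.log (a + 1) - Real.log a ≤ 1 / a := by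
    have := aux3 a ha0
    rwa [Real.log_div (by positivity) (ne_of_gt ha0)] at this
  have hdb : Real.log (b + 1) - Real.log b ≤ 1 / b := by
    have := aux3 b hb0
    rwa [Real.log_div (by positivity) (ne_of_gt hb0)] at this
  constructor
  · rw [lba]
    rw [la1] at hlow_a; rw [lb] at hup_b
    linarith
  · rw [lba]
    rw [la] at hup_a; rw [lb1] at hlow_b
    linarith

/-- For `p(x) = exp(∑_{k≥1} d_k x^k / k)` with `0 < d⁻ ≤ d_k ≤ d⁺` and
`m ≥ n ≥ 1`: `(m/n)^{d⁻} e^{-d⁻/n} ≤ p(e^{-1/m})/p(e^{-1/n}) ≤ (m/n)^{d⁺} e^{d⁺/m}`. -/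
theorem stmt_4 (d : ℕ → ℝ) (dm dp : ℝ) (hdm : 0 < dm)
    (hd : ∀ k : ℕ, 1 ≤ k → dm ≤ d k ∧ d k ≤ dp)
    (hsum : ∀ x : ℝ, 0 ≤ x → x < 1 →
      Summable (fun k : ℕ => d (k + 1) * x ^ (k + 1) / ((k : ℝ) + 1)))
    (m n : ℕ) (hn : 1 ≤ n) (hnm : n ≤ m) :
    ((m : ℝ) / n) ^ dm * Real.exp (-dm / n) ≤
        Real.exp (∑' k : ℕ, d (k + 1) * Real.exp (-1 / (m : ℝ)) ^ (k + 1) / ((k : ℝ) + 1)) /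
        Real.exp (∑' k : ℕ, d (k + 1) * Real.exp (-1 / (n : ℝ)) ^ (k + 1) / ((k : ℝ) + 1)) ∧
      Real.exp (∑' k : ℕ, d (k + 1) * Real.exp (-1 / (m : ℝ)) ^ (k + 1) / ((k : ℝ) + 1)) /
        Real.exp (∑' k : ℕ, d (k + 1) * Real.exp (-1 / (n : ℝ)) ^ (k + 1) / ((k : ℝ) + 1)) ≤
      ((m : ℝ) / n) ^ dp * Real.exp (dp / m) := by
  have hm : 1 ≤ m := le_trans hn hnm
  have hnR : (1 : ℝ) ≤ (n : ℝ) := by exact_mod_cast hn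
  have hmR : (1 : ℝ) ≤ (m : ℝ) := by exact_mod_cast hm
  have hnmR : (n : ℝ) ≤ (m : ℝ) := by exact_mod_cast hnm
  have hn0 : (0 : ℝ) < n := by linarith
  have hm0 : (0 : ℝ) < m := by linarith
  set xm : ℝ := Real.exp (-1 / (m : ℝ)) with hxm
  set xn : ℝ := Real.exp (-1 / (n : ℝ)) with hxn
  have hxm_pos : 0 < xm := Real.exp_pos _
  have hxn_pos : 0 < xn := Real.exp_pos _
  have hxm_lt1 : xm < 1 := by
    rw [hxm, Real.exp_lt_one_iff, neg_div, neg_lt_zero]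
    positivity
  have hxn_lt1 : xn < 1 := by
    rw [hxn, Real.exp_lt_one_iff, neg_div, neg_lt_zero]
    positivity
  have hxnm : xn ≤ xm := by
    rw [hxm, hxn, Real.exp_le_exp]
    rw [show (-1 : ℝ)/(n:ℝ) = -(1/n) from by ring,
        show (-1 : ℝ)/(m:ℝ) = -(1/m) from by ring]
    have := one_div_le_one_div_of_le hn0 hnmR
    linarith
  -- summability facts
  have hSdm : Summable (fun k : ℕ => d (k + 1) * xm ^ (k + 1) / ((k : ℝ) + 1)) :=
    hsum xm hxm_pos.le hxm_lt1
  have hSdn : Summable (fun k : ℕ => d (k + 1) * xn ^ (k + 1) / ((k : ℝ) + 1)) :=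
    hsum xn hxn_pos.le hxn_lt1
  have hHm : HasSum (fun k : ℕ => xm ^ (k + 1) / ((k : ℝ) + 1)) (-Real.log (1 - xm)) := by
    have := Real.hasSum_pow_div_log_of_abs_lt_one
      (x := xm) (by rw [abs_of_pos hxm_pos]; exact hxm_lt1)
    exact this
  have hHn : HasSum (fun k : ℕ => xn ^ (k + 1) / ((k : ℝ) + 1)) (-Real.log (1 - xn)) := by
    have := Real.hasSum_pow_div_log_of_abs_lt_one
      (x := xn) (by rw [abs_of_pos hxn_pos]; exact hxn_lt1)
    exact this
  set L : ℝ := Real.log (1 - xn) - Real.log (1 - xm) with hL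
  -- HasSum for dm and dp weighted difference series
  have hHdm : HasSum (fun k : ℕ => dm * (xm ^ (k + 1) - xn ^ (k + 1)) / ((k : ℝ) + 1))
      (dm * L) := by
    have h := (hHm.sub hHn).mul_left dm
    have : dm * (-Real.log (1 - xm) - -Real.log (1 - xn)) = dm * L := by
      rw [hL]; ring
    rw [this] at h
    rw [show (fun k : ℕ => dm * (xm ^ (k + 1) - xn ^ (k + 1)) / ((k : ℝ) + 1)) =
      fun i : ℕ => dm * (xm ^ (i + 1) / ((i : ℝ) + 1) - xn ^ (i + 1) / ((i : ℝ) + 1)) from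
      funext fun k => by ring]
    exact h
  have hHdp : HasSum (fun k : ℕ => dp * (xm ^ (k + 1) - xn ^ (k + 1)) / ((k : ℝ) + 1))
      (dp * L) := by
    have h := (hHm.sub hHn).mul_left dp
    have : dp * (-Real.log (1 - xm) - -Real.log (1 - xn)) = dp * L := by
      rw [hL]; ring
    rw [this] at h
    rw [show (fun k : ℕ => dp * (xm ^ (k + 1) - xn ^ (k + 1)) / ((k : ℝ) + 1)) =
      fun i : ℕ => dp * (xm ^ (i + 1) / ((i : ℝ) + 1) - xn ^ (i + 1) / ((i : ℝ) + 1)) from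
      funext fun k => by ring]
    exact h
  -- the difference of the two d-weighted sums
  have hdiff : (∑' k : ℕ, d (k + 1) * xm ^ (k + 1) / ((k : ℝ) + 1)) -
      (∑' k : ℕ, d (k + 1) * xn ^ (k + 1) / ((k : ℝ) + 1)) =
      ∑' k : ℕ, d (k + 1) * (xm ^ (k + 1) - xn ^ (k + 1)) / ((k : ℝ) + 1) := by
    rw [← Summable.tsum_sub hSdm hSdn]
    congr 1
    funext k
    ring
  have hDsum : Summable (fun k : ℕ => d (k + 1) * (xm ^ (k + 1) - xn ^ (k + 1)) / ((k : ℝ) + 1)) := by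
    have := hSdm.sub hSdn
    rw [show (fun k : ℕ => d (k + 1) * (xm ^ (k + 1) - xn ^ (k + 1)) / ((k : ℝ) + 1)) =
      fun b : ℕ => d (b + 1) * xm ^ (b + 1) / ((b : ℝ) + 1) - d (b + 1) * xn ^ (b + 1) / ((b : ℝ) + 1) from
      funext fun k => by ring]
    exact this
  -- termwise bounds
  have hterm_low : ∀ k : ℕ, dm * (xm ^ (k + 1) - xn ^ (k + 1)) / ((k : ℝ) + 1) ≤
      d (k + 1) * (xm ^ (k + 1) - xn ^ (k + 1)) / ((k : ℝ) + 1) := by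
    intro k
    have hkp : (0 : ℝ) < (k : ℝ) + 1 := by positivity
    have hx : 0 ≤ xm ^ (k + 1) - xn ^ (k + 1) := by
      have := pow_le_pow_left₀ hxn_pos.le hxnm (k + 1)
      linarith
    have hdk := (hd (k + 1) (Nat.le_add_left 1 k)).1
    gcongr
  have hterm_up : ∀ k : ℕ, d (k + 1) * (xm ^ (k + 1) - xn ^ (k + 1)) / ((k : ℝ) + 1) ≤
      dp * (xm ^ (k + 1) - xn ^ (k + 1)) / ((k : ℝ) + 1) := by
    intro k
    have hkp : (0 : ℝ) < (k : ℝ) + 1 := by positivity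
    have hx : 0 ≤ xm ^ (k + 1) - xn ^ (k + 1) := by
      have := pow_le_pow_left₀ hxn_pos.le hxnm (k + 1)
      linarith
    have hdk := (hd (k + 1) (Nat.le_add_left 1 k)).2
    gcongr
  have hlow : dm * L ≤ ∑' k : ℕ, d (k + 1) * (xm ^ (k + 1) - xn ^ (k + 1)) / ((k : ℝ) + 1) := by
    rw [← hHdm.tsum_eq]
    exact Summable.tsum_le_tsum hterm_low hHdm.summable hDsum
  have hup : (∑' k : ℕ, d (k + 1) * (xm ^ (k + 1) - xn ^ (k + 1)) / ((k : ℝ) + 1)) ≤ dp * L := by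
    rw [← hHdp.tsum_eq]
    exact Summable.tsum_le_tsum hterm_up hDsum hHdp.summable
  -- bounds on L
  obtain ⟨hL_low, hL_up⟩ := L_bounds (n : ℝ) (m : ℝ) hnR hnmR
  have hL_low' : Real.log ((m : ℝ) / n) - 1 / n ≤ L := hL_low
  have hL_up' : L ≤ Real.log ((m : ℝ) / n) + 1 / m := hL_up
  have hdp_pos : 0 < dp := lt_of_lt_of_le hdm (le_trans (hd 1 le_rfl).1 (hd 1 le_rfl).2)
  have hratio_pos : (0 : ℝ) < (m : ℝ) / n := by positivity
  have hrpow_dm : ((m : ℝ) / n) ^ dm = Real.exp (Real.log ((m : ℝ) / n) * dm) :=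
    Real.rpow_def_of_pos hratio_pos dm
  have hrpow_dp : ((m : ℝ) / n) ^ dp = Real.exp (Real.log ((m : ℝ) / n) * dp) :=
    Real.rpow_def_of_pos hratio_pos dp
  have hexp_div : Real.exp (∑' k : ℕ, d (k + 1) * xm ^ (k + 1) / ((k : ℝ) + 1)) /
      Real.exp (∑' k : ℕ, d (k + 1) * xn ^ (k + 1) / ((k : ℝ) + 1)) =
      Real.exp ((∑' k : ℕ, d (k + 1) * xm ^ (k + 1) / ((k : ℝ) + 1)) -
        (∑' k : ℕ, d (k + 1) * xn ^ (k + 1) / ((k : ℝ) + 1))) := (Real.exp_sub _ _).symm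
  constructor
  · rw [hexp_div, hrpow_dm, ← Real.exp_add, Real.exp_le_exp, hdiff]
    have h1 : dm * (Real.log ((m : ℝ) / n) - 1 / n) ≤ dm * L :=
      mul_le_mul_of_nonneg_left hL_low' hdm.le
    have h2 : Real.log ((m : ℝ) / n) * dm + -dm / n = dm * (Real.log ((m : ℝ) / n) - 1 / n) := by
      field_simp; ring
    rw [h2]
    linarith
  · rw [hexp_div, hrpow_dp, ← Real.exp_add, Real.exp_le_exp, hdiff]
    have h1 : dp * L ≤ dp * (Real.log ((m : ℝ) / n) + 1 / m) :=
      mul_le_mul_of_nonneg_left hL_up' hdp_pos.le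
    have h2 : Real.log ((m : ℝ) / n) * dp + dp / m = dp * (Real.log ((m : ℝ) / n) + 1 / m) := by
      field_simp
    rw [h2]
    linarith
end

section
/- Let u(x) = exp(Σ_{k≥1} (u_k/k) x^k) with 0 ≤ u_k ≤ A. Then there is a constant C = C(A) such that for all j ≥ 1: ∫_0^1 x^{j−1}/u(x) dx ≤ C/(j·u(e^{-1/j})). -/
open MeasureTheory Set intervalIntegral Real

namespace Stmt8Aux

variable {A : ℝ} {u : ℕ → ℝ}

lemma summable_S (hu : ∀ k : ℕ, 1 ≤ k → 0 ≤ u k ∧ u k ≤ A) {x : ℝ}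
    (hx0 : 0 ≤ x) (hx1 : x < 1) :
    Summable (fun k : ℕ => u (k + 1) * x ^ (k + 1) / ((k : ℝ) + 1)) := by
  apply Summable.of_nonneg_of_le (f := fun k : ℕ => (A * x) * x ^ k)
  · intro k
    have h := hu (k + 1) (Nat.le_add_left 1 k)
    have hk : (0:ℝ) < (k:ℝ) + 1 := by positivity
    exact div_nonneg (mul_nonneg h.1 (pow_nonneg hx0 _)) hk.le
  · intro k
    have h := hu (k + 1) (Nat.le_add_left 1 k)
    have h1 : (1:ℝ) ≤ (k:ℝ) + 1 := by
      have : (0:ℝ) ≤ (k:ℝ) := Nat.cast_nonneg _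
      linarith
    have hxp : (0:ℝ) ≤ x ^ (k + 1) := pow_nonneg hx0 _
    calc u (k + 1) * x ^ (k + 1) / ((k : ℝ) + 1)
        ≤ u (k + 1) * x ^ (k + 1) / 1 :=
          div_le_div_of_nonneg_left (mul_nonneg h.1 hxp) one_pos h1
      _ = u (k + 1) * x ^ (k + 1) := by rw [div_one]
      _ ≤ A * x ^ (k + 1) := mul_le_mul_of_nonneg_right h.2 hxp
      _ = (A * x) * x ^ k := by ring
  · exact (summable_geometric_of_lt_one hx0 hx1).mul_left _

lemma hasSum_L {x : ℝ} (hx0 : 0 ≤ x) (hx1 : x < 1) :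
    HasSum (fun k : ℕ => x ^ (k + 1) / ((k : ℝ) + 1)) (-Real.log (1 - x)) := by
  have := Real.hasSum_pow_div_log_of_abs_lt_one (x := x) (by rw [abs_of_nonneg hx0]; exact hx1)
  exact this

/-- key comparison: S y - S x ≤ A * (log (1-x) - log (1-y)) for 0 ≤ x ≤ y < 1 -/
lemma key (hu : ∀ k : ℕ, 1 ≤ k → 0 ≤ u k ∧ u k ≤ A) {x y : ℝ}
    (hx0 : 0 ≤ x) (hxy : x ≤ y) (hy1 : y < 1) :
    (∑' k : ℕ, u (k + 1) * y ^ (k + 1) / ((k : ℝ) + 1))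
      - (∑' k : ℕ, u (k + 1) * x ^ (k + 1) / ((k : ℝ) + 1))
      ≤ A * (Real.log (1 - x) - Real.log (1 - y)) := by
  have hy0 : 0 ≤ y := le_trans hx0 hxy
  have hx1 : x < 1 := lt_of_le_of_lt hxy hy1
  have hsx := summable_S hu hx0 hx1
  have hsy := summable_S hu hy0 hy1
  have hLx := hasSum_L hx0 hx1
  have hLy := hasSum_L hy0 hy1
  have hR : HasSum (fun k : ℕ => A * (y ^ (k + 1) / ((k : ℝ) + 1) - x ^ (k + 1) / ((k : ℝ) + 1)))
      (A * (Real.log (1 - x) - Real.log (1 - y))) := by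
    have := (hLy.sub hLx).mul_left A
    convert this using 2
    · rfl
    · ring
  rw [← Summable.tsum_sub hsy hsx, ← hR.tsum_eq]
  refine Summable.tsum_le_tsum (fun k => ?_) (hsy.sub hsx) hR.summable
  have h := hu (k + 1) (Nat.le_add_left 1 k)
  have hk : (0:ℝ) < (k:ℝ) + 1 := by positivity
  have hpow : x ^ (k + 1) ≤ y ^ (k + 1) := pow_le_pow_left₀ hx0 hxy _
  have heq : u (k + 1) * y ^ (k + 1) / ((k : ℝ) + 1) - u (k + 1) * x ^ (k + 1) / ((k : ℝ) + 1)
      = u (k + 1) * ((y ^ (k + 1) - x ^ (k + 1)) / ((k : ℝ) + 1)) := by ring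
  rw [heq]
  have h2 : A * (y ^ (k + 1) / ((k : ℝ) + 1) - x ^ (k + 1) / ((k : ℝ) + 1))
      = A * ((y ^ (k + 1) - x ^ (k + 1)) / ((k : ℝ) + 1)) := by ring
  rw [h2]
  exact mul_le_mul_of_nonneg_right h.2 (div_nonneg (by linarith) hk.le)

lemma S_mono (hu : ∀ k : ℕ, 1 ≤ k → 0 ≤ u k ∧ u k ≤ A) {x y : ℝ}
    (hx0 : 0 ≤ x) (hxy : x ≤ y) (hy1 : y < 1) :
    (∑' k : ℕ, u (k + 1) * x ^ (k + 1) / ((k : ℝ) + 1))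
      ≤ ∑' k : ℕ, u (k + 1) * y ^ (k + 1) / ((k : ℝ) + 1) := by
  have hy0 : 0 ≤ y := le_trans hx0 hxy
  have hx1 : x < 1 := lt_of_le_of_lt hxy hy1
  refine Summable.tsum_le_tsum (fun k => ?_) (summable_S hu hx0 hx1) (summable_S hu hy0 hy1)
  have h := hu (k + 1) (Nat.le_add_left 1 k)
  have hk : (0:ℝ) < (k:ℝ) + 1 := by positivity
  rw [div_le_div_iff_of_pos_right hk]
  exact mul_le_mul_of_nonneg_left (pow_le_pow_left₀ hx0 hxy _) h.1

lemma S_nonneg (hu : ∀ k : ℕ, 1 ≤ k → 0 ≤ u k ∧ u k ≤ A) {x : ℝ} (hx0 : 0 ≤ x) :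
    0 ≤ ∑' k : ℕ, u (k + 1) * x ^ (k + 1) / ((k : ℝ) + 1) := by
  refine tsum_nonneg (fun k => ?_)
  have h := hu (k + 1) (Nat.le_add_left 1 k)
  have hk : (0:ℝ) < (k:ℝ) + 1 := by positivity
  exact div_nonneg (mul_nonneg h.1 (pow_nonneg hx0 _)) hk.le

lemma S_zero : (∑' k : ℕ, u (k + 1) * (0:ℝ) ^ (k + 1) / ((k : ℝ) + 1)) = 0 := by
  convert tsum_zero with k
  simp

lemma beta_bound {A : ℝ} (hA : 0 ≤ A) {j : ℕ} (hj : 2 ≤ j) :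
    ∫ x in (0:ℝ)..1, x ^ (j-1) * (1-x) ^ A
      ≤ 2 ^ (A+1) / (j:ℝ) ^ (A+1) * Real.Gamma (A+1) := by
  have hj2 : (2:ℝ) ≤ (j:ℝ) := by exact_mod_cast hj
  set r : ℝ := (j:ℝ) - 1 with hr
  have hr0 : 0 < r := by rw [hr]; linarith
  have hcast : ((j-1:ℕ):ℝ) = r := by
    rw [hr, Nat.cast_sub (by omega : 1 ≤ j), Nat.cast_one]
  have h1 : ∫ x in (0:ℝ)..1, x ^ (j-1) * (1-x) ^ A
      = ∫ x in (0:ℝ)..1, (1-x) ^ (j-1) * x ^ A := by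
    have := intervalIntegral.integral_comp_sub_left (a := (0:ℝ)) (b := 1)
      (fun t : ℝ => (1-t) ^ (j-1) * t ^ A) 1
    simp only [sub_zero, sub_self] at this
    rw [← this]
    refine intervalIntegral.integral_congr (fun x _ => ?_)
    simp [sub_sub_cancel]
  have hc2 : Continuous (fun x:ℝ => x ^ A * Real.exp (-(r*x))) :=
    (Real.continuous_rpow_const hA).mul (Real.continuous_exp.comp (by continuity))
  have h2 : ∫ x in (0:ℝ)..1, (1-x) ^ (j-1) * x ^ A
      ≤ ∫ x in (0:ℝ)..1, x ^ A * Real.exp (-(r*x)) := by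
    have hc1 : Continuous (fun x:ℝ => (1-x) ^ (j-1) * x ^ A) :=
      ((continuous_const.sub continuous_id).pow _).mul (Real.continuous_rpow_const hA)
    refine intervalIntegral.integral_mono_on zero_le_one
      (hc1.intervalIntegrable _ _) (hc2.intervalIntegrable _ _) (fun x hx => ?_)
    obtain ⟨hx0, hx1⟩ := hx
    have hbase : (0:ℝ) ≤ 1 - x := by linarith
    have hb2 : 1 - x ≤ Real.exp (-x) := by
      have := Real.add_one_le_exp (-x); linarith
    have hp : (1-x) ^ (j-1) ≤ Real.exp (-x) ^ (j-1) := pow_le_pow_left₀ hbase hb2 _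
    have he : Real.exp (-x) ^ (j-1) = Real.exp (-(r*x)) := by
      rw [← Real.exp_nat_mul, hcast]; ring_nf
    calc (1-x) ^ (j-1) * x ^ A ≤ Real.exp (-(r*x)) * x ^ A := by
          refine mul_le_mul_of_nonneg_right ?_ (Real.rpow_nonneg hx0 A)
          rw [← he]; exact hp
      _ = x ^ A * Real.exp (-(r*x)) := by ring
  have hint : IntegrableOn (fun x:ℝ => x ^ A * Real.exp (-(r*x))) (Ioi 0) := by
    have h := integrableOn_rpow_mul_exp_neg_mul_rpow
      (show (-1:ℝ) < A by linarith) (by norm_num : (0:ℝ) < 1) hr0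
    refine h.congr_fun (fun x hx => ?_) measurableSet_Ioi
    beta_reduce; rw [Real.rpow_one]; ring_nf
  have h3 : ∫ x in (0:ℝ)..1, x ^ A * Real.exp (-(r*x))
      ≤ ∫ x in Ioi (0:ℝ), x ^ A * Real.exp (-(r*x)) := by
    rw [intervalIntegral.integral_of_le zero_le_one]
    refine setIntegral_mono_set hint ?_ (HasSubset.Subset.eventuallyLE Ioc_subset_Ioi_self)
    refine (ae_restrict_iff' measurableSet_Ioi).2 (Filter.Eventually.of_forall (fun x hx => ?_))
    exact mul_nonneg (Real.rpow_nonneg (le_of_lt hx) A) (Real.exp_nonneg _)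
  have h4 : ∫ x in Ioi (0:ℝ), x ^ A * Real.exp (-(r*x))
      = (1/r) ^ (A+1) * Real.Gamma (A+1) := by
    have := Real.integral_rpow_mul_exp_neg_mul_Ioi (show (0:ℝ) < A+1 by linarith) hr0
    simpa using this
  have h5 : (1/r) ^ (A+1) * Real.Gamma (A+1)
      ≤ 2 ^ (A+1) / (j:ℝ) ^ (A+1) * Real.Gamma (A+1) := by
    have hj0 : (0:ℝ) < (j:ℝ) := by linarith
    have hle : (1/r) ≤ 2/(j:ℝ) := by
      rw [div_le_div_iff₀ hr0 hj0]; rw [hr]; linarith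
    refine mul_le_mul_of_nonneg_right ?_ (Real.Gamma_pos_of_pos (by linarith)).le
    calc (1/r)^(A+1) ≤ (2/(j:ℝ))^(A+1) :=
          Real.rpow_le_rpow (by positivity) hle (by linarith)
      _ = 2^(A+1)/(j:ℝ)^(A+1) := Real.div_rpow (by norm_num) hj0.le _
  rw [h1]
  exact le_trans h2 (le_trans h3 (le_of_eq h4 |>.trans h5))

end Stmt8Aux

open Stmt8Aux

/-- For `u(x) = exp(∑ u_k x^k / k)` with `0 ≤ u_k ≤ A` there is `C = C(A)`
with `∫₀¹ x^{j−1}/u(x) dx ≤ C/(j u(e^{-1/j}))` for all `j ≥ 1`. -/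
theorem stmt_8 (A : ℝ) (hA : 0 ≤ A) :
    ∃ C : ℝ, 0 < C ∧
      ∀ (u : ℕ → ℝ), (∀ k : ℕ, 1 ≤ k → 0 ≤ u k ∧ u k ≤ A) →
        ∀ j : ℕ, 1 ≤ j →
          (∫ x in (0 : ℝ)..1,
              x ^ (j - 1) / Real.exp (∑' k : ℕ, u (k + 1) * x ^ (k + 1) / ((k : ℝ) + 1)))
            ≤ C / ((j : ℝ) *
              Real.exp (∑' k : ℕ,
                u (k + 1) * Real.exp (-1 / (j : ℝ)) ^ (k + 1) / ((k : ℝ) + 1))) := by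
  have hΓ : 0 < Real.Gamma (A+1) := Real.Gamma_pos_of_pos (by linarith)
  refine ⟨2 ^ A + 2 ^ (2*A+1) * Real.Gamma (A+1) + 1, by positivity, ?_⟩
  intro u hu j hj
  have hj0 : (0:ℝ) < (j:ℝ) := by exact_mod_cast Nat.lt_of_lt_of_le Nat.zero_lt_one hj
  set y : ℝ := Real.exp (-1 / (j:ℝ)) with hydef
  set E : ℝ := Real.exp (∑' k : ℕ, u (k + 1) * y ^ (k + 1) / ((k : ℝ) + 1)) with hEdef
  have hE0 : 0 < E := Real.exp_pos _
  have hy0 : 0 < y := Real.exp_pos _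
  have hy1 : y < 1 := by
    rw [hydef, Real.exp_lt_one_iff]
    exact div_neg_of_neg_of_pos (by norm_num) hj0
  have h1y : 1 / (2*(j:ℝ)) ≤ 1 - y := by
    have hj1 : (1:ℝ) ≤ (j:ℝ) := by exact_mod_cast hj
    set t : ℝ := 1/(j:ℝ) with htdef
    have ht0 : 0 < t := by positivity
    have ht1 : t ≤ 1 := by rw [htdef, div_le_one hj0]; exact hj1
    have he : 1 + t ≤ Real.exp t := by have := Real.add_one_le_exp t; linarith
    have hexp : y ≤ 1/(1+t) := by
      rw [hydef, neg_div, ← htdef, Real.exp_neg]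
      rw [one_div, inv_le_inv₀ (by positivity) (by linarith)]
      exact he
    have h2 : 1/(1+t) ≤ 1 - t/2 := by
      rw [div_le_iff₀ (by linarith : (0:ℝ) < 1 + t)]
      nlinarith
    have ht2 : t/2 = 1/(2*(j:ℝ)) := by rw [htdef]; field_simp
    linarith [hexp.trans h2, ht2.symm.le]
  have h1y0 : (0:ℝ) < 1 - y := lt_of_lt_of_le (by positivity) h1y
  -- E ≤ (2j)^A
  have hEC : E ≤ (2*(j:ℝ)) ^ A := by
    have hkey0 := key hu (le_refl (0:ℝ)) hy0.le hy1
    rw [S_zero, sub_zero, sub_zero, Real.log_one] at hkey0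
    have hlog2 : -Real.log (1-y) ≤ Real.log (2*(j:ℝ)) := by
      rw [← Real.log_inv]
      refine Real.log_le_log (by positivity) ?_
      rw [inv_le_comm₀ h1y0 (by positivity), ← one_div]
      exact h1y
    calc E ≤ Real.exp (A * (0 - Real.log (1-y))) := Real.exp_le_exp.2 hkey0
      _ ≤ Real.exp (A * Real.log (2*(j:ℝ))) := by
          refine Real.exp_le_exp.2 (mul_le_mul_of_nonneg_left ?_ hA)
          rw [zero_sub]; exact hlog2
      _ = (2*(j:ℝ)) ^ A := by
          rw [Real.rpow_def_of_pos (by positivity), mul_comm]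
  set g : ℝ → ℝ := fun x =>
    x ^ (j - 1) / Real.exp (∑' k : ℕ, u (k + 1) * x ^ (k + 1) / ((k : ℝ) + 1)) with hgdef
  show ∫ x in (0:ℝ)..1, g x ≤ (2 ^ A + 2 ^ (2*A+1) * Real.Gamma (A+1) + 1) / ((j:ℝ) * E)
  by_cases hInt : IntervalIntegrable g volume 0 1
  swap
  · rw [intervalIntegral.integral_undef hInt]
    positivity
  have hg1 : ∀ x ∈ Icc (0:ℝ) 1, g x ≤ x ^ (j-1) := by
    intro x hx
    have hS := S_nonneg hu hx.1
    have h1 : 1 ≤ Real.exp (∑' k : ℕ, u (k + 1) * x ^ (k + 1) / ((k : ℝ) + 1)) := by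
      have := Real.exp_le_exp.2 hS
      rwa [Real.exp_zero] at this
    calc g x ≤ x ^ (j-1) / 1 :=
          div_le_div_of_nonneg_left (pow_nonneg hx.1 _) one_pos h1
      _ = x ^ (j-1) := div_one _
  rcases eq_or_lt_of_le hj with hj1 | hj2
  · -- j = 1
    have hjr : (j:ℝ) = 1 := by exact_mod_cast hj1.symm
    have hle1 : ∫ x in (0:ℝ)..1, g x ≤ 1 := by
      have hmono := intervalIntegral.integral_mono_on zero_le_one hInt
        (_root_.intervalIntegrable_const (c := (1:ℝ)))
        (fun x hx => (hg1 x hx).trans (pow_le_one₀ hx.1 hx.2))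
      simpa using hmono
    refine hle1.trans ?_
    rw [hjr, one_mul, le_div_iff₀ hE0, one_mul]
    have h2p : (0:ℝ) < 2^(2*A+1) := Real.rpow_pos_of_pos two_pos _
    have hE2 : E ≤ 2^A := by
      have : (2*(j:ℝ))^A = 2^A := by rw [hjr, mul_one]
      rw [← this]; exact hEC
    nlinarith
  · -- 2 ≤ j
    have hj2' : 2 ≤ j := hj2
    have hInt0y : IntervalIntegrable g volume 0 y :=
      hInt.mono_set (by
        rw [Set.uIcc_of_le hy0.le, Set.uIcc_of_le zero_le_one]
        exact Icc_subset_Icc_right hy1.le)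
    have hInty1 : IntervalIntegrable g volume y 1 :=
      hInt.mono_set (by
        rw [Set.uIcc_of_le hy1.le, Set.uIcc_of_le zero_le_one]
        exact Icc_subset_Icc_left hy0.le)
    have hsplit : ∫ x in (0:ℝ)..1, g x = (∫ x in (0:ℝ)..y, g x) + ∫ x in y..1, g x :=
      (intervalIntegral.integral_add_adjacent_intervals hInt0y hInty1).symm
    have hone : ∀ᵐ (x:ℝ), x ≠ (1:ℝ) := by
      refine (MeasureTheory.ae_iff).2 ?_
      simp only [not_not]
      have hset : {x : ℝ | x = 1} = {1} := by ext z; simp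
      rw [hset]
      exact measure_singleton 1
    -- RIGHT part
    have hR : ∫ x in y..1, g x ≤ 1/((j:ℝ)*E) := by
      have hMcont : Continuous (fun x:ℝ => x^(j-1)/E) := by
        exact (continuous_pow _).div_const _
      have hae : g ≤ᵐ[volume.restrict (Icc y 1)] (fun x => x^(j-1)/E) := by
        refine (ae_restrict_iff' measurableSet_Icc).2 ?_
        filter_upwards [hone] with x hx1 hmem
        have hx1' : x < 1 := lt_of_le_of_ne hmem.2 hx1
        have hSm := S_mono hu hy0.le hmem.1 hx1'
        have hEe : E ≤ Real.exp (∑' k:ℕ, u (k+1) * x^(k+1)/((k:ℝ)+1)) :=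
          Real.exp_le_exp.2 hSm
        exact div_le_div_of_nonneg_left (pow_nonneg (le_trans hy0.le hmem.1) _) hE0 hEe
      have h1 := intervalIntegral.integral_mono_ae_restrict hy1.le hInty1
        (hMcont.intervalIntegrable _ _) hae
      have h2 : ∫ x in y..1, x^(j-1)/E = ((1:ℝ) - y^(j-1+1))/(((j-1:ℕ):ℝ)+1)/E := by
        rw [intervalIntegral.integral_div, integral_pow, one_pow]
      have hcast : ((j-1:ℕ):ℝ)+1 = (j:ℝ) := by
        rw [Nat.cast_sub (by omega : 1 ≤ j)]; push_cast; ring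
      rw [h2, hcast] at h1
      refine h1.trans ?_
      rw [div_div]
      rw [div_le_div_iff₀ (mul_pos hj0 hE0) (mul_pos hj0 hE0)]
      have hyp : (0:ℝ) ≤ y^(j-1+1) := pow_nonneg hy0.le _
      nlinarith [mul_pos hj0 hE0]
    -- LEFT part
    have hL : ∫ x in (0:ℝ)..y, g x
        ≤ (2^(A+1)/(j:ℝ)^(A+1) * Real.Gamma (A+1)) / ((1-y)^A * E) := by
      set M : ℝ → ℝ := fun x => (x^(j-1) * (1-x)^A) / ((1-y)^A * E) with hMdef
      have hden : (0:ℝ) < (1-y)^A * E := mul_pos (Real.rpow_pos_of_pos h1y0 A) hE0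
      have hMcont : ContinuousOn M (Set.uIcc 0 y) := by
        rw [Set.uIcc_of_le hy0.le]
        apply ContinuousOn.div_const
        apply ContinuousOn.mul
        · exact (continuous_pow _).continuousOn
        · refine ContinuousOn.rpow_const
            ((continuous_const.sub continuous_id).continuousOn) (fun x hx => ?_)
          exact Or.inl (sub_ne_zero.2 (ne_of_gt (lt_of_le_of_lt hx.2 hy1)))
      have hpt : ∀ x ∈ Icc (0:ℝ) y, g x ≤ M x := by
        intro x hx
        obtain ⟨hx0, hxy⟩ := hx
        have hx1 : (0:ℝ) < 1 - x := by
          have := lt_of_le_of_lt hxy hy1; linarith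
        have hkey := key hu hx0 hxy hy1
        have hexp : E / Real.exp (∑' k:ℕ, u (k+1) * x^(k+1)/((k:ℝ)+1))
            ≤ (1-x)^A / (1-y)^A := by
          rw [hEdef, ← Real.exp_sub]
          calc Real.exp ((∑' k:ℕ, u (k+1) * y^(k+1)/((k:ℝ)+1))
                - ∑' k:ℕ, u (k+1) * x^(k+1)/((k:ℝ)+1))
              ≤ Real.exp (A*(Real.log (1-x) - Real.log (1-y))) := Real.exp_le_exp.2 hkey
            _ = (1-x)^A/(1-y)^A := by
                rw [Real.rpow_def_of_pos hx1, Real.rpow_def_of_pos h1y0, ← Real.exp_sub]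
                congr 1
                ring
        rw [div_le_div_iff₀ (Real.exp_pos _) (Real.rpow_pos_of_pos h1y0 A)] at hexp
        show x ^ (j-1) / Real.exp (∑' k:ℕ, u (k+1) * x^(k+1)/((k:ℝ)+1)) ≤ M x
        rw [hMdef]
        rw [div_le_div_iff₀ (Real.exp_pos _) hden]
        calc x^(j-1) * ((1-y)^A * E) = x^(j-1) * (E * (1-y)^A) := by ring
          _ ≤ x^(j-1) * ((1-x)^A * Real.exp (∑' k:ℕ, u (k+1) * x^(k+1)/((k:ℝ)+1))) :=
              mul_le_mul_of_nonneg_left hexp (pow_nonneg hx0 _)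
          _ = x^(j-1)*(1-x)^A * Real.exp (∑' k:ℕ, u (k+1) * x^(k+1)/((k:ℝ)+1)) := by ring
      have h1 := intervalIntegral.integral_mono_on hy0.le hInt0y
        (hMcont.intervalIntegrable) hpt
      have h2 : ∫ x in (0:ℝ)..y, M x
          = (∫ x in (0:ℝ)..y, x^(j-1)*(1-x)^A)/((1-y)^A * E) :=
        intervalIntegral.integral_div _ _
      have hFc : Continuous (fun x:ℝ => x^(j-1)*(1-x)^A) :=
        (continuous_pow _).mul
          ((Real.continuous_rpow_const hA).comp (continuous_const.sub continuous_id))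
      have h3 : ∫ x in (0:ℝ)..y, x^(j-1)*(1-x)^A ≤ ∫ x in (0:ℝ)..1, x^(j-1)*(1-x)^A := by
        have hsplit2 := intervalIntegral.integral_add_adjacent_intervals
          (hFc.intervalIntegrable (μ := volume) 0 y) (hFc.intervalIntegrable (μ := volume) y 1)
        have hnn : 0 ≤ ∫ x in y..1, x^(j-1)*(1-x)^A :=
          intervalIntegral.integral_nonneg hy1.le (fun x hx =>
            mul_nonneg (pow_nonneg (hy0.le.trans hx.1) _)
              (Real.rpow_nonneg (by linarith [hx.2]) _))
        linarith [hsplit2]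
      have h4 := beta_bound hA hj2'
      rw [h2] at h1
      refine h1.trans ?_
      exact (div_le_div_iff_of_pos_right hden).2 (h3.trans h4)
    -- combine
    rw [hsplit]
    have hfinal : (2^(A+1)/(j:ℝ)^(A+1) * Real.Gamma (A+1)) / ((1-y)^A * E)
        ≤ 2^(2*A+1) * Real.Gamma (A+1) / ((j:ℝ)*E) := by
      have hP : (0:ℝ) < 1/((2:ℝ)^A * (j:ℝ)^A) := by positivity
      have hPy : 1/((2:ℝ)^A * (j:ℝ)^A) ≤ (1-y)^A := by
        have hm := Real.rpow_le_rpow (by positivity) h1y hA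
        calc 1/((2:ℝ)^A*(j:ℝ)^A) = (1/(2*(j:ℝ)))^A := by
              rw [Real.div_rpow zero_le_one (by positivity), Real.one_rpow,
                Real.mul_rpow (by norm_num) hj0.le]
          _ ≤ (1-y)^A := hm
      have hnum : (0:ℝ) ≤ 2^(A+1)/(j:ℝ)^(A+1) * Real.Gamma (A+1) := by positivity
      calc (2^(A+1)/(j:ℝ)^(A+1) * Real.Gamma (A+1)) / ((1-y)^A * E)
          ≤ (2^(A+1)/(j:ℝ)^(A+1) * Real.Gamma (A+1)) / ((1/((2:ℝ)^A*(j:ℝ)^A)) * E) :=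
            div_le_div_of_nonneg_left hnum (mul_pos hP hE0)
              (mul_le_mul_of_nonneg_right hPy hE0.le)
        _ = 2^(2*A+1) * Real.Gamma (A+1) / ((j:ℝ)*E) := by
            rw [show (2:ℝ)^(2*A+1) = 2^(A+1) * 2^A from by
                  rw [← Real.rpow_add two_pos]; ring_nf,
                show (j:ℝ)^(A+1) = (j:ℝ)^A * (j:ℝ) from by
                  rw [Real.rpow_add hj0, Real.rpow_one]]
            have hjA : (0:ℝ) < (j:ℝ)^A := Real.rpow_pos_of_pos hj0 A
            have h2A : (0:ℝ) < (2:ℝ)^A := Real.rpow_pos_of_pos two_pos A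
            field_simp
    have hsum : 2^(2*A+1) * Real.Gamma (A+1) / ((j:ℝ)*E) + 1/((j:ℝ)*E)
        ≤ (2 ^ A + 2 ^ (2*A+1) * Real.Gamma (A+1) + 1) / ((j:ℝ) * E) := by
      rw [← add_div]
      refine (div_le_div_iff_of_pos_right (mul_pos hj0 hE0)).2 ?_
      have h2p : (0:ℝ) < 2^A := Real.rpow_pos_of_pos two_pos A
      linarith
    calc (∫ x in (0:ℝ)..y, g x) + ∫ x in y..1, g x
        ≤ (2^(A+1)/(j:ℝ)^(A+1) * Real.Gamma (A+1)) / ((1-y)^A * E) + 1/((j:ℝ)*E) :=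
          add_le_add hL hR
      _ ≤ 2^(2*A+1) * Real.Gamma (A+1) / ((j:ℝ)*E) + 1/((j:ℝ)*E) :=
          add_le_add_left hfinal _
      _ ≤ (2 ^ A + 2 ^ (2*A+1) * Real.Gamma (A+1) + 1) / ((j:ℝ) * E) := hsum
end

section
/- Let u(x) = exp(Σ_{k≥1} (u_k/k) x^k) with 0 ≤ u_k ≤ A. Then there is a constant C = C(A) such that for all j ≥ n ≥ 1: ∫_0^{e^{-1/n}} x^{j−1}/u(x) dx ≤ C·e^{-j/n}/(j·u(e^{-1/n})). -/
open Real

lemma stmt9_rpow_add_le {A a b : ℝ} (hA : 0 ≤ A) (ha : 0 ≤ a) (hb : 0 ≤ b) :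
    (a + b) ^ A ≤ 2 ^ A * (a ^ A + b ^ A) := by
  have hmax : 0 ≤ max a b := le_max_of_le_left ha
  have h1 : a + b ≤ 2 * max a b := by
    rcases le_total a b with h | h
    · rw [max_eq_right h]; linarith
    · rw [max_eq_left h]; linarith
  calc (a + b) ^ A ≤ (2 * max a b) ^ A :=
        Real.rpow_le_rpow (by linarith) h1 hA
    _ = 2 ^ A * (max a b) ^ A := Real.mul_rpow (by norm_num) hmax
    _ ≤ 2 ^ A * (a ^ A + b ^ A) := by
        have : (max a b) ^ A ≤ a ^ A + b ^ A := by
          rcases le_total a b with h | h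
          · rw [max_eq_right h]
            exact le_add_of_nonneg_left (Real.rpow_nonneg ha A)
          · rw [max_eq_left h]
            exact le_add_of_nonneg_right (Real.rpow_nonneg hb A)
        have h2 : (0:ℝ) ≤ 2 ^ A := (Real.rpow_pos_of_pos two_pos A).le
        nlinarith

lemma stmt9_rpow_le_exp {A : ℝ} (hA : 0 ≤ A) :
    ∃ D : ℝ, 1 ≤ D ∧ ∀ t : ℝ, 0 ≤ t → t ^ A ≤ D * Real.exp (t / 2) := by
  set m := ⌈A⌉₊ with hm
  refine ⟨(2:ℝ) ^ m * (m.factorial : ℝ) + 1, le_add_of_nonneg_left (by positivity), ?_⟩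
  intro t ht
  have hexp : 1 ≤ Real.exp (t / 2) := Real.one_le_exp (by linarith)
  have hfac : (0:ℝ) < 2 ^ m * m.factorial := by positivity
  rcases le_total t 1 with h1 | h1
  · have h2 : t ^ A ≤ 1 := Real.rpow_le_one ht h1 hA
    nlinarith
  · have h2 : t ^ A ≤ t ^ (m:ℝ) :=
      Real.rpow_le_rpow_of_exponent_le h1 (Nat.le_ceil A)
    rw [Real.rpow_natCast] at h2
    have h3 : (t / 2) ^ m / m.factorial ≤ Real.exp (t / 2) :=
      Real.pow_div_factorial_le_exp _ (by linarith) m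
    have h4 : t ^ m = 2 ^ m * (t / 2) ^ m := by
      rw [← mul_pow]; ring_nf
    have hfacpos : (0:ℝ) < (m.factorial : ℝ) := by positivity
    have h5 : (t / 2) ^ m ≤ (m.factorial : ℝ) * Real.exp (t / 2) := by
      rw [div_le_iff₀ hfacpos] at h3; linarith [h3]
    calc t ^ A ≤ t ^ m := h2
      _ = 2 ^ m * (t / 2) ^ m := h4
      _ ≤ 2 ^ m * ((m.factorial : ℝ) * Real.exp (t / 2)) := by
          have : (0:ℝ) < 2 ^ m := by positivity
          nlinarith
      _ ≤ ((2:ℝ) ^ m * (m.factorial : ℝ) + 1) * Real.exp (t / 2) := by nlinarith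

open Real MeasureTheory

/-- For `u(x) = exp(∑ u_k x^k / k)` with `0 ≤ u_k ≤ A` there is `C = C(A)`
with `∫₀^{e^{-1/n}} x^{j−1}/u(x) dx ≤ C e^{-j/n}/(j u(e^{-1/n}))` for all `j ≥ n ≥ 1`. -/
theorem stmt_9 (A : ℝ) (hA : 0 ≤ A) :
    ∃ C : ℝ, 0 < C ∧
      ∀ (u : ℕ → ℝ), (∀ k : ℕ, 1 ≤ k → 0 ≤ u k ∧ u k ≤ A) →
        ∀ n j : ℕ, 1 ≤ n → n ≤ j →
          (∫ x in (0 : ℝ)..Real.exp (-1 / (n : ℝ)),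
              x ^ (j - 1) / Real.exp (∑' k : ℕ, u (k + 1) * x ^ (k + 1) / ((k : ℝ) + 1)))
            ≤ C * Real.exp (-(j : ℝ) / (n : ℝ)) / ((j : ℝ) *
              Real.exp (∑' k : ℕ,
                u (k + 1) * Real.exp (-1 / (n : ℝ)) ^ (k + 1) / ((k : ℝ) + 1))) := by
  obtain ⟨D, hD1, hD⟩ := stmt9_rpow_le_exp hA
  refine ⟨(4:ℝ) ^ A * (1 + 2 * D), by positivity, ?_⟩
  intro u hu n j hn hnj
  have hn0 : (0:ℝ) < (n:ℝ) := by exact_mod_cast hn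
  have hj1 : 1 ≤ j := le_trans hn hnj
  have hj0 : (0:ℝ) < (j:ℝ) := by exact_mod_cast hj1
  have hnj' : (n:ℝ) ≤ (j:ℝ) := by exact_mod_cast hnj
  set r : ℝ := Real.exp (-1 / (n:ℝ)) with hrdef
  have hr0 : 0 < r := Real.exp_pos _
  have hrlt : r < 1 := by
    rw [hrdef]
    exact Real.exp_lt_one_iff.2 (div_neg_of_neg_of_pos (by norm_num) hn0)
  set S : ℝ → ℝ := fun x => ∑' k : ℕ, u (k + 1) * x ^ (k + 1) / ((k : ℝ) + 1) with hSdef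
  -- facts about u
  have hu0 : ∀ k : ℕ, 0 ≤ u (k+1) := fun k => (hu (k+1) (by omega)).1
  have huA : ∀ k : ℕ, u (k+1) ≤ A := fun k => (hu (k+1) (by omega)).2
  -- log series
  have hlog : ∀ x : ℝ, 0 ≤ x → x < 1 →
      HasSum (fun k : ℕ => x ^ (k+1) / ((k:ℝ)+1)) (-Real.log (1 - x)) := by
    intro x hx hx1
    have h := hasSum_pow_div_log_of_abs_lt_one (x := x) (by rw [abs_of_nonneg hx]; exact hx1)
    convert h using 2 with k
  have hsum : ∀ x : ℝ, 0 ≤ x → x < 1 →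
      Summable (fun k : ℕ => u (k + 1) * x ^ (k + 1) / ((k : ℝ) + 1)) := by
    intro x hx hx1
    refine Summable.of_nonneg_of_le (fun k => ?_) (fun k => ?_)
      (((hlog x hx hx1).summable).mul_left A)
    · have := hu0 k; positivity
    · rw [mul_div_assoc]
      exact mul_le_mul_of_nonneg_right (huA k) (by positivity)
  -- key comparison
  have hSle : ∀ x : ℝ, 0 ≤ x → x ≤ r →
      S r - S x ≤ A * (Real.log (1 - x) - Real.log (1 - r)) := by
    intro x hx hxr
    have hx1 : x < 1 := lt_of_le_of_lt hxr hrlt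
    have Hr := hlog r hr0.le hrlt
    have Hx := hlog x hx hx1
    have hsr := hsum r hr0.le hrlt
    have hsx := hsum x hx hx1
    have H2 : HasSum (fun k : ℕ => A * (r ^ (k+1) / ((k:ℝ)+1) - x ^ (k+1) / ((k:ℝ)+1)))
        (A * (-Real.log (1 - r) - -Real.log (1 - x))) := (Hr.sub Hx).mul_left A
    calc S r - S x
        = ∑' k : ℕ, (u (k+1) * r ^ (k+1) / ((k:ℝ)+1) - u (k+1) * x ^ (k+1) / ((k:ℝ)+1)) :=
          (Summable.tsum_sub hsr hsx).symm
      _ ≤ ∑' k : ℕ, A * (r ^ (k+1) / ((k:ℝ)+1) - x ^ (k+1) / ((k:ℝ)+1)) := by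
          refine Summable.tsum_le_tsum (fun k => ?_) (hsr.sub hsx) H2.summable
          have hxk : x ^ (k+1) ≤ r ^ (k+1) := pow_le_pow_left₀ hx hxr _
          have hk : (0:ℝ) < (k:ℝ)+1 := by positivity
          rw [mul_div_assoc, mul_div_assoc, ← mul_sub, ← sub_div]
          exact mul_le_mul (huA k) le_rfl (div_nonneg (by linarith [hxk]) (by positivity)) hA
      _ = A * (Real.log (1 - x) - Real.log (1 - r)) := by rw [H2.tsum_eq]; ring

  -- continuity of S on [0, r]
  have hScont : ContinuousOn S (Set.Icc 0 r) := by
    rw [hSdef]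
    have hgeo : Summable (fun k : ℕ => A * r ^ (k+1)) := by
      have h := (summable_geometric_of_lt_one hr0.le hrlt).mul_left (A * r)
      simpa [pow_succ, mul_comm, mul_assoc, mul_left_comm] using h
    refine continuousOn_tsum (f := fun k (x : ℝ) => u (k+1) * x ^ (k+1) / ((k:ℝ)+1))
      (u := fun k => A * r ^ (k+1)) (fun k => ?_) hgeo ?_
    · exact ((continuous_const.mul (continuous_pow _)).div_const _).continuousOn
    · rintro k x ⟨hx0, hxr⟩
      have hterm : 0 ≤ u (k+1) * x ^ (k+1) / ((k:ℝ)+1) := by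
        have := hu0 k; positivity
      rw [Real.norm_eq_abs, abs_of_nonneg hterm]
      have hk1 : (1:ℝ) ≤ (k:ℝ)+1 := by
        have : (0:ℝ) ≤ (k:ℝ) := Nat.cast_nonneg k
        linarith
      calc u (k+1) * x ^ (k+1) / ((k:ℝ)+1) ≤ u (k+1) * x ^ (k+1) := by
            apply div_le_self (by have := hu0 k; positivity) hk1
        _ ≤ A * r ^ (k+1) :=
            mul_le_mul (huA k) (pow_le_pow_left₀ hx0 hxr _) (by positivity)
              hA
  have hgcont : ContinuousOn (fun x : ℝ => x ^ (j-1) / Real.exp (S x)) (Set.Icc 0 r) := by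
    refine ContinuousOn.div (continuousOn_pow _)
      (Real.continuous_exp.comp_continuousOn hScont) ?_
    exact fun x _ => (Real.exp_pos _).ne'
  have huIcc : Set.uIcc (0:ℝ) r = Set.Icc 0 r := Set.uIcc_of_le hr0.le
  have hgint : IntervalIntegrable (fun x : ℝ => x ^ (j-1) / Real.exp (S x)) volume 0 r :=
    (huIcc ▸ hgcont).intervalIntegrable
  -- constants
  set p1 : ℝ := (j:ℝ) - 1 with hp1
  set p2 : ℝ := (j:ℝ)/2 - 1 with hp2
  have h1r : 0 < 1 - r := by linarith
  set E : ℝ := Real.exp (-(S r)) * ((1-r) ^ A)⁻¹ * 2 ^ A with hE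
  have hE0 : 0 < E :=
    mul_pos (mul_pos (Real.exp_pos _) (inv_pos.2 (Real.rpow_pos_of_pos h1r A)))
      (Real.rpow_pos_of_pos two_pos A)
  set K : ℝ := E * (1/(n:ℝ)) ^ A with hKdef
  set K' : ℝ := E * D * (((j:ℝ) ^ A)⁻¹) * r ^ ((j:ℝ)/2) with hK'def
  have hK0 : 0 < K := mul_pos hE0 (Real.rpow_pos_of_pos (by positivity) A)
  have hK'0 : 0 < K' := by
    have := Real.rpow_pos_of_pos hj0 A
    have := Real.rpow_pos_of_pos hr0 ((j:ℝ)/2)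
    apply mul_pos (mul_pos (mul_pos hE0 (by linarith)) (by positivity)) (by positivity)
  -- pointwise bound on Ioc
  have hpoint : ∀ x ∈ Set.Ioc (0:ℝ) r,
      x ^ (j-1) / Real.exp (S x) ≤ K * x ^ p1 + K' * x ^ p2 := by
    rintro x ⟨hx0, hxr⟩
    have hx1 : x < 1 := lt_of_le_of_lt hxr hrlt
    have h1x : 0 < 1 - x := by linarith
    set s : ℝ := Real.log r - Real.log x with hs
    have hs0 : 0 ≤ s := sub_nonneg.2 (Real.log_le_log hx0 hxr)
    have hlx : 1 - x ≤ 1/(n:ℝ) + s := by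
      have h1 : Real.log x ≤ x - 1 := Real.log_le_sub_one_of_pos hx0
      have h2 : Real.log r = -(1/(n:ℝ)) := by rw [hrdef, Real.log_exp, neg_div]
      rw [hs, h2]; linarith
    have hexp1 : Real.exp (S r - S x) ≤ (1-x) ^ A * ((1-r) ^ A)⁻¹ := by
      calc Real.exp (S r - S x) ≤ Real.exp (A * (Real.log (1-x) - Real.log (1-r))) :=
            Real.exp_le_exp.2 (hSle x hx0.le hxr)
        _ = (1-x) ^ A * ((1-r) ^ A)⁻¹ := by
            rw [mul_sub, Real.exp_sub, Real.rpow_def_of_pos h1x, Real.rpow_def_of_pos h1r,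
              mul_comm A (Real.log (1-x)), mul_comm A (Real.log (1-r)), div_eq_mul_inv]
    have hbound2 : (1-x) ^ A ≤ 2 ^ A * ((1/(n:ℝ)) ^ A + s ^ A) := by
      calc (1-x) ^ A ≤ (1/(n:ℝ) + s) ^ A := Real.rpow_le_rpow h1x.le hlx hA
        _ ≤ _ := stmt9_rpow_add_le hA (by positivity) hs0
    have hbound3 : s ^ A ≤ D * ((j:ℝ) ^ A)⁻¹ * (r ^ ((j:ℝ)/2) * x ^ (-(j:ℝ)/2)) := by
      have h1 := hD ((j:ℝ) * s) (by positivity)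
      have h2 : ((j:ℝ) * s) ^ A = (j:ℝ) ^ A * s ^ A := Real.mul_rpow hj0.le hs0
      have h3 : Real.exp ((j:ℝ) * s / 2) = r ^ ((j:ℝ)/2) * x ^ (-(j:ℝ)/2) := by
        rw [Real.rpow_def_of_pos hr0, Real.rpow_def_of_pos hx0, ← Real.exp_add, hs]
        congr 1
        ring
      rw [h2, h3] at h1
      have hjA : (0:ℝ) < (j:ℝ) ^ A := Real.rpow_pos_of_pos hj0 A
      calc s ^ A = ((j:ℝ)^A)⁻¹ * ((j:ℝ)^A * s^A) := by field_simp
        _ ≤ ((j:ℝ)^A)⁻¹ * (D * (r ^ ((j:ℝ)/2) * x ^ (-(j:ℝ)/2))) :=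
            mul_le_mul_of_nonneg_left h1 (by positivity)
        _ = D * ((j:ℝ)^A)⁻¹ * (r ^ ((j:ℝ)/2) * x ^ (-(j:ℝ)/2)) := by ring
    have hxpow : (x:ℝ) ^ (j-1) = x ^ p1 := by
      rw [← Real.rpow_natCast x (j-1), hp1]
      congr 1
      push_cast [Nat.cast_sub hj1]
      ring
    have hxsplit : x ^ p1 * x ^ (-(j:ℝ)/2) = x ^ p2 := by
      rw [← Real.rpow_add hx0, hp1, hp2]
      congr 1
      ring
    have hX1 : (0:ℝ) ≤ x ^ p1 := (Real.rpow_pos_of_pos hx0 _).le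
    have key : x ^ (j-1) / Real.exp (S x)
        = Real.exp (-(S r)) * Real.exp (S r - S x) * x ^ p1 := by
      rw [hxpow, div_eq_mul_inv, ← Real.exp_neg, ← Real.exp_add]
      ring_nf
    have hc0 : (0:ℝ) < Real.exp (-(S r)) := Real.exp_pos _
    have hc1 : (0:ℝ) < ((1-r) ^ A)⁻¹ := inv_pos.2 (Real.rpow_pos_of_pos h1r A)
    have h2A : (0:ℝ) < (2:ℝ) ^ A := Real.rpow_pos_of_pos two_pos A
    calc x ^ (j-1) / Real.exp (S x)
        = Real.exp (-(S r)) * Real.exp (S r - S x) * x ^ p1 := key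
      _ ≤ Real.exp (-(S r)) * ((1-x) ^ A * ((1-r)^A)⁻¹) * x ^ p1 := by
          apply mul_le_mul_of_nonneg_right
            (mul_le_mul_of_nonneg_left hexp1 hc0.le) hX1
      _ ≤ Real.exp (-(S r)) * ((2 ^ A * ((1/(n:ℝ)) ^ A + s ^ A)) * ((1-r)^A)⁻¹) * x ^ p1 := by
          apply mul_le_mul_of_nonneg_right _ hX1
          apply mul_le_mul_of_nonneg_left _ hc0.le
          exact mul_le_mul_of_nonneg_right hbound2 hc1.le
      _ = E * ((1/(n:ℝ)) ^ A) * x ^ p1 + E * (s ^ A) * x ^ p1 := by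
          rw [hE]; ring
      _ ≤ E * ((1/(n:ℝ)) ^ A) * x ^ p1
            + E * (D * ((j:ℝ) ^ A)⁻¹ * (r ^ ((j:ℝ)/2) * x ^ (-(j:ℝ)/2))) * x ^ p1 := by
          apply add_le_add le_rfl
          apply mul_le_mul_of_nonneg_right
            (mul_le_mul_of_nonneg_left hbound3 hE0.le) hX1
      _ = K * x ^ p1 + K' * x ^ p2 := by
          rw [hKdef, hK'def, ← hxsplit]; ring
  -- integrability of the majorant
  have hint1 : IntervalIntegrable (fun x : ℝ => x ^ p1) volume 0 r :=
    intervalIntegral.intervalIntegrable_rpow' (by rw [hp1]; linarith)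
  have hint2 : IntervalIntegrable (fun x : ℝ => x ^ p2) volume 0 r :=
    intervalIntegral.intervalIntegrable_rpow' (by rw [hp2]; linarith)
  have hhint : IntervalIntegrable (fun x : ℝ => K * x ^ p1 + K' * x ^ p2) volume 0 r :=
    (hint1.const_mul K).add (hint2.const_mul K')
  have hmono : (∫ x in (0:ℝ)..r, x ^ (j-1) / Real.exp (S x))
      ≤ ∫ x in (0:ℝ)..r, (K * x ^ p1 + K' * x ^ p2) := by
    rw [intervalIntegral.integral_of_le hr0.le, intervalIntegral.integral_of_le hr0.le]
    exact setIntegral_mono_on hgint.1 hhint.1 measurableSet_Ioc hpoint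
  have hval : (∫ x in (0:ℝ)..r, (K * x ^ p1 + K' * x ^ p2))
      = K * (r ^ (j:ℝ) / (j:ℝ)) + K' * (r ^ ((j:ℝ)/2) / ((j:ℝ)/2)) := by
    rw [intervalIntegral.integral_add (hint1.const_mul K) (hint2.const_mul K'),
      intervalIntegral.integral_const_mul, intervalIntegral.integral_const_mul,
      integral_rpow (Or.inl (by rw [hp1]; linarith)),
      integral_rpow (Or.inl (by rw [hp2]; linarith))]
    have e1 : p1 + 1 = (j:ℝ) := by rw [hp1]; ring
    have e2 : p2 + 1 = (j:ℝ)/2 := by rw [hp2]; ring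
    rw [e1, e2, Real.zero_rpow (by positivity), Real.zero_rpow (by positivity)]
    ring
  -- final assembly
  have hr2 : r ^ ((j:ℝ)/2) * r ^ ((j:ℝ)/2) = r ^ (j:ℝ) := by
    rw [← Real.rpow_add hr0]
    congr 1
    ring
  have hrj : r ^ (j:ℝ) = Real.exp (-(j:ℝ)/(n:ℝ)) := by
    rw [Real.rpow_def_of_pos hr0, hrdef, Real.log_exp]
    congr 1
    ring

  -- n-dependent estimates
  have hy1 : 1/(n:ℝ) ≤ 1 := by rw [div_le_one hn0]; exact_mod_cast hn
  have hy0 : (0:ℝ) < 1/(n:ℝ) := by positivity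
  have hrle : r ≤ (1 + 1/(n:ℝ))⁻¹ := by
    rw [hrdef, neg_div, Real.exp_neg]
    apply inv_anti₀ (by positivity)
    linarith [Real.add_one_le_exp (1/(n:ℝ))]
  have h2n : 1/(n:ℝ) ≤ 2*(1-r) := by
    have hz : (1 + 1/(n:ℝ))⁻¹ * (1 + 1/(n:ℝ)) = 1 := inv_mul_cancel₀ (by positivity)
    nlinarith [hz, hrle, mul_nonneg (by linarith : (0:ℝ) ≤ 1 - 1/(n:ℝ)) hy0.le]
  have ha : ((j:ℝ)^A)⁻¹ ≤ (1/(n:ℝ))^A := by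
    rw [one_div, Real.inv_rpow hn0.le]
    exact inv_anti₀ (Real.rpow_pos_of_pos hn0 A)
      (Real.rpow_le_rpow hn0.le hnj' hA)
  have hb : ((1-r)^A)⁻¹ * (1/(n:ℝ))^A ≤ 2^A := by
    have h1 : (1/(n:ℝ))^A ≤ (2*(1-r))^A := Real.rpow_le_rpow hy0.le h2n hA
    rw [Real.mul_rpow (by norm_num) h1r.le] at h1
    have hpr : ((1-r):ℝ)^A ≠ 0 := (Real.rpow_pos_of_pos h1r A).ne'
    calc ((1-r)^A)⁻¹ * (1/(n:ℝ))^A ≤ ((1-r)^A)⁻¹ * (2^A * (1-r)^A) :=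
          mul_le_mul_of_nonneg_left h1 (by positivity)
      _ = 2^A := by field_simp
  have hD0 : (0:ℝ) < D := by linarith
  have hfinal2 : K * (r ^ (j:ℝ) / (j:ℝ)) + K' * (r ^ ((j:ℝ)/2) / ((j:ℝ)/2))
      ≤ Real.exp (-(S r)) * (4:ℝ)^A * (1 + 2*D) * r ^ (j:ℝ) / (j:ℝ) := by
    have e1 : K' * (r ^ ((j:ℝ)/2) / ((j:ℝ)/2))
        = 2*(E * D * ((j:ℝ)^A)⁻¹) * (r ^ (j:ℝ) / (j:ℝ)) := by
      rw [hK'def, ← hr2]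
      field_simp
    have h4 : (4:ℝ)^A = 2^A * 2^A := by
      rw [← Real.mul_rpow (by norm_num) (by norm_num)]
      norm_num
    have hEK : E * (1/(n:ℝ))^A ≤ Real.exp (-(S r)) * (4:ℝ)^A := by
      rw [hE, h4]
      calc Real.exp (-(S r)) * ((1-r)^A)⁻¹ * 2^A * (1/(n:ℝ))^A
          = Real.exp (-(S r)) * 2^A * (((1-r)^A)⁻¹ * (1/(n:ℝ))^A) := by ring
        _ ≤ Real.exp (-(S r)) * 2^A * 2^A := by
            apply mul_le_mul_of_nonneg_left hb (by positivity)
        _ = Real.exp (-(S r)) * (2^A * 2^A) := by ring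
    have hEK' : E * D * ((j:ℝ)^A)⁻¹ ≤ Real.exp (-(S r)) * (4:ℝ)^A * D := by
      calc E * D * ((j:ℝ)^A)⁻¹ ≤ E * D * (1/(n:ℝ))^A :=
            mul_le_mul_of_nonneg_left ha (mul_pos hE0 hD0).le
        _ = (E * (1/(n:ℝ))^A) * D := by ring
        _ ≤ (Real.exp (-(S r)) * (4:ℝ)^A) * D :=
            mul_le_mul_of_nonneg_right hEK hD0.le
        _ = _ := by ring
    rw [hKdef, e1]
    have hpos : (0:ℝ) ≤ r ^ (j:ℝ) / (j:ℝ) := by positivity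
    calc E * (1/(n:ℝ))^A * (r^(j:ℝ)/(j:ℝ)) + 2*(E*D*((j:ℝ)^A)⁻¹) * (r^(j:ℝ)/(j:ℝ))
        ≤ (Real.exp (-(S r)) * (4:ℝ)^A) * (r^(j:ℝ)/(j:ℝ))
            + 2*(Real.exp (-(S r)) * (4:ℝ)^A * D) * (r^(j:ℝ)/(j:ℝ)) := by
          apply add_le_add
          · exact mul_le_mul_of_nonneg_right hEK hpos
          · exact mul_le_mul_of_nonneg_right (by linarith [hEK']) hpos
      _ = Real.exp (-(S r)) * (4:ℝ)^A * (1 + 2*D) * r^(j:ℝ)/(j:ℝ) := by ring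
  have hrhs : Real.exp (-(S r)) * (4:ℝ)^A * (1 + 2*D) * r ^ (j:ℝ) / (j:ℝ)
      = (4:ℝ)^A * (1 + 2*D) * Real.exp (-(j:ℝ)/(n:ℝ)) / ((j:ℝ) * Real.exp (S r)) := by
    rw [hrj, Real.exp_neg]
    have h1 : Real.exp (S r) ≠ 0 := (Real.exp_pos _).ne'
    field_simp
  exact ((hmono.trans_eq hval).trans hfinal2).trans_eq hrhs
end

section
/- Let L(z) = Σ_{j≥1} d_j (f̂(j)−1) z^j / j with 0 < d_j ≤ d⁺ and |f̂(j)| ≤ 1, and let ρ(p) = (Σ_{j≥1} |f̂(j)−1|^p / j)^{1/p} for fixed p > 1. Then for all n, m ≥ 1: |L(e^{-1/n}) − L(e^{-1/m})| ≤ d⁺ ρ(p)(1 + |log(n/m)|), and |L(e^{-1/n})| ≤ d⁺ ρ(p)(1 + log n). -/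
open Real

lemma aux_rpow_cancel (r : ℝ) (hr : r ≠ 0) (j : ℕ) :
    (((j : ℝ) + 1) ^ (-(1 / r))) ^ r = ((j : ℝ) + 1)⁻¹ := by
  have ht : (0:ℝ) ≤ (j : ℝ) + 1 := by positivity
  rw [← Real.rpow_mul ht]
  have : -(1 / r) * r = -1 := by field_simp
  rw [this, Real.rpow_neg_one]

/-- Hölder-type bound with weight `1/(j+1)`. -/
lemma aux_holder (g w : ℕ → ℝ) (hg0 : ∀ j, 0 ≤ g j) (hw0 : ∀ j, 0 ≤ w j) (hw1 : ∀ j, w j ≤ 1)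
    (P : ℝ) (hP : 1 < P)
    (hsg : Summable (fun j : ℕ => g j ^ P / ((j : ℝ) + 1)))
    (hsw : Summable (fun j : ℕ => w j / ((j : ℝ) + 1)))
    (T : ℝ) (hT1 : 1 ≤ T) (hwT : (∑' j : ℕ, w j / ((j : ℝ) + 1)) ≤ T) :
    (Summable fun j : ℕ => g j * w j / ((j : ℝ) + 1)) ∧
      (∑' j : ℕ, g j * w j / ((j : ℝ) + 1))
        ≤ (∑' j : ℕ, g j ^ P / ((j : ℝ) + 1)) ^ (1 / P) * T := by
  set Q := Real.conjExponent P with hQdef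
  have hpq : P.HolderConjugate Q := Real.HolderConjugate.conjExponent hP
  have hQ1 : 1 < Q := hpq.symm.lt
  have ht : ∀ j : ℕ, (0:ℝ) < (j : ℝ) + 1 := fun j => by positivity
  set F : ℕ → ℝ := fun j => g j * ((j : ℝ) + 1) ^ (-(1 / P)) with hF
  set G : ℕ → ℝ := fun j => w j * ((j : ℝ) + 1) ^ (-(1 / Q)) with hG
  have hF0 : ∀ j, 0 ≤ F j := fun j => mul_nonneg (hg0 j) (Real.rpow_nonneg (ht j).le _)
  have hG0 : ∀ j, 0 ≤ G j := fun j => mul_nonneg (hw0 j) (Real.rpow_nonneg (ht j).le _)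
  have hFP : ∀ j, F j ^ P = g j ^ P / ((j : ℝ) + 1) := by
    intro j
    rw [hF, Real.mul_rpow (hg0 j) (Real.rpow_nonneg (ht j).le _),
      aux_rpow_cancel P hpq.ne_zero j, div_eq_mul_inv]
  have hGQ : ∀ j, G j ^ Q = w j ^ Q / ((j : ℝ) + 1) := by
    intro j
    rw [hG, Real.mul_rpow (hw0 j) (Real.rpow_nonneg (ht j).le _),
      aux_rpow_cancel Q hpq.symm.ne_zero j, div_eq_mul_inv]
  have hFG : ∀ j, F j * G j = g j * w j / ((j : ℝ) + 1) := by
    intro j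
    have : ((j : ℝ) + 1) ^ (-(1 / P)) * ((j : ℝ) + 1) ^ (-(1 / Q)) = ((j : ℝ) + 1)⁻¹ := by
      rw [← Real.rpow_add (ht j)]
      have h1 : -(1 / P) + -(1 / Q) = -1 := by
        have := hpq.inv_add_inv_eq_one
        rw [inv_eq_one_div, inv_eq_one_div] at this
        linarith
      rw [h1, Real.rpow_neg_one]
    rw [hF, hG]
    calc g j * ((j : ℝ) + 1) ^ (-(1 / P)) * (w j * ((j : ℝ) + 1) ^ (-(1 / Q)))
        = g j * w j * (((j : ℝ) + 1) ^ (-(1 / P)) * ((j : ℝ) + 1) ^ (-(1 / Q))) := by ring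
      _ = g j * w j / ((j : ℝ) + 1) := by rw [this, div_eq_mul_inv]
  -- w^Q ≤ w pointwise
  have hwQ_le : ∀ j, w j ^ Q ≤ w j := by
    intro j
    rcases eq_or_lt_of_le (hw0 j) with h | h
    · rw [← h, Real.zero_rpow hpq.symm.ne_zero]
    · calc w j ^ Q ≤ w j ^ (1:ℝ) :=
            Real.rpow_le_rpow_of_exponent_ge h (hw1 j) hQ1.le
        _ = w j := Real.rpow_one _
  have hwQ0 : ∀ j, 0 ≤ w j ^ Q / ((j : ℝ) + 1) := fun j =>
    div_nonneg (Real.rpow_nonneg (hw0 j) _) (ht j).le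
  have hsGQ : Summable (fun j : ℕ => w j ^ Q / ((j : ℝ) + 1)) := by
    apply Summable.of_nonneg_of_le hwQ0 (fun j => ?_) hsw
    exact div_le_div_of_nonneg_right (hwQ_le j) (ht j).le |>.trans_eq rfl
  have hsF : Summable (fun j : ℕ => F j ^ P) := by simpa only [hFP] using hsg
  have hsG : Summable (fun j : ℕ => G j ^ Q) := by simpa only [hGQ] using hsGQ
  obtain ⟨hsum, hbound⟩ := summable_and_inner_le_Lp_mul_Lq_tsum_of_nonneg hpq hF0 hG0 hsF hsG
  have hsum' : Summable fun j : ℕ => g j * w j / ((j : ℝ) + 1) := by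
    simpa only [hFG] using hsum
  refine ⟨hsum', ?_⟩
  have hGQT : (∑' j : ℕ, G j ^ Q) ≤ T := by
    calc (∑' j : ℕ, G j ^ Q) = ∑' j : ℕ, w j ^ Q / ((j : ℝ) + 1) := by simp only [hGQ]
      _ ≤ ∑' j : ℕ, w j / ((j : ℝ) + 1) := by
          apply Summable.tsum_le_tsum (fun j => div_le_div_of_nonneg_right (hwQ_le j) (ht j).le) hsGQ hsw
      _ ≤ T := hwT
  have hGQ0 : (0:ℝ) ≤ ∑' j : ℕ, G j ^ Q :=
    tsum_nonneg (fun j => Real.rpow_nonneg (hG0 j) _)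
  have hrho0 : (0:ℝ) ≤ (∑' j : ℕ, F j ^ P) ^ (1 / P) :=
    Real.rpow_nonneg (tsum_nonneg (fun j => Real.rpow_nonneg (hF0 j) _)) _
  calc (∑' j : ℕ, g j * w j / ((j : ℝ) + 1)) = ∑' j : ℕ, F j * G j := by simp only [hFG]
    _ ≤ (∑' j : ℕ, F j ^ P) ^ (1 / P) * (∑' j : ℕ, G j ^ Q) ^ (1 / Q) := hbound
    _ ≤ (∑' j : ℕ, F j ^ P) ^ (1 / P) * T := by
        apply mul_le_mul_of_nonneg_left _ hrho0
        calc (∑' j : ℕ, G j ^ Q) ^ (1 / Q) ≤ T ^ (1 / Q) :=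
              Real.rpow_le_rpow hGQ0 hGQT hpq.symm.one_div_nonneg
          _ ≤ T ^ (1:ℝ) := Real.rpow_le_rpow_of_exponent_le hT1 (by
              rw [div_le_one hpq.symm.pos]; linarith)
          _ = T := Real.rpow_one T
    _ = (∑' j : ℕ, g j ^ P / ((j : ℝ) + 1)) ^ (1 / P) * T := by simp only [hFP]

lemma aux_main (d : ℕ → ℝ) (dp : ℝ) (hd : ∀ j : ℕ, 1 ≤ j → 0 < d j ∧ d j ≤ dp)
    (fhat : ℕ → ℂ) (hf : ∀ j, ‖fhat j‖ ≤ 1)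
    (P : ℝ) (hP : 1 < P)
    (hsum : Summable (fun j : ℕ => ‖fhat (j + 1) - 1‖ ^ P / ((j : ℝ) + 1)))
    (x y : ℝ) (hy0 : 0 ≤ y) (hyx : y ≤ x) (hx1 : x < 1)
    (T : ℝ) (hT1 : 1 ≤ T)
    (hT : Real.log (1 - y) - Real.log (1 - x) ≤ T) :
    ‖(∑' j : ℕ, (d (j + 1) : ℂ) * (fhat (j + 1) - 1) * ((x : ℝ) : ℂ) ^ (j + 1) / ((j : ℂ) + 1))
      - (∑' j : ℕ, (d (j + 1) : ℂ) * (fhat (j + 1) - 1) * ((y : ℝ) : ℂ) ^ (j + 1) / ((j : ℂ) + 1))‖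
      ≤ dp * (∑' j : ℕ, ‖fhat (j + 1) - 1‖ ^ P / ((j : ℝ) + 1)) ^ (1 / P) * T := by
  have hx0 : 0 ≤ x := hy0.trans hyx
  have hy1 : y < 1 := lt_of_le_of_lt hyx hx1
  have ht : ∀ j : ℕ, (0:ℝ) < (j : ℝ) + 1 := fun j => by positivity
  set g : ℕ → ℝ := fun j => ‖fhat (j + 1) - 1‖ with hg
  set w : ℕ → ℝ := fun j => x ^ (j + 1) - y ^ (j + 1) with hw
  have hg0 : ∀ j, 0 ≤ g j := fun j => norm_nonneg _
  have hg2 : ∀ j, g j ≤ 2 := by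
    intro j
    calc g j ≤ ‖fhat (j + 1)‖ + ‖(1:ℂ)‖ := norm_sub_le _ _
      _ ≤ 1 + 1 := by have := hf (j + 1); simp at this ⊢; linarith
      _ = 2 := by norm_num
  have hw0 : ∀ j, 0 ≤ w j := fun j => sub_nonneg.2 (pow_le_pow_left₀ hy0 hyx _)
  have hw1 : ∀ j, w j ≤ 1 := by
    intro j
    have h1 : x ^ (j + 1) ≤ 1 := pow_le_one₀ hx0 hx1.le
    have h2 : 0 ≤ y ^ (j + 1) := pow_nonneg hy0 _
    simp only [hw]; linarith
  -- log series
  have hxs : HasSum (fun j : ℕ => x ^ (j + 1) / ((j : ℝ) + 1)) (-Real.log (1 - x)) := by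
    have := Real.hasSum_pow_div_log_of_abs_lt_one (x := x) (by rw [abs_of_nonneg hx0]; exact hx1)
    convert this using 2 with j
  have hys : HasSum (fun j : ℕ => y ^ (j + 1) / ((j : ℝ) + 1)) (-Real.log (1 - y)) := by
    have := Real.hasSum_pow_div_log_of_abs_lt_one (x := y) (by rw [abs_of_nonneg hy0]; exact hy1)
    convert this using 2 with j
  have hws : HasSum (fun j : ℕ => w j / ((j : ℝ) + 1))
      (-Real.log (1 - x) - -Real.log (1 - y)) := by
    have := hxs.sub hys
    convert this using 2 with j
    · rfl
    simp only [hw]; rw [sub_div]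
  have hsw : Summable (fun j : ℕ => w j / ((j : ℝ) + 1)) := hws.summable
  have hwT : (∑' j : ℕ, w j / ((j : ℝ) + 1)) ≤ T := by
    rw [hws.tsum_eq]; linarith
  obtain ⟨hA, hAle⟩ := aux_holder g w hg0 hw0 hw1 P hP hsum hsw T hT1 hwT
  have hdp0 : 0 ≤ dp := le_of_lt (lt_of_lt_of_le (hd 1 le_rfl).1 (hd 1 le_rfl).2)
  -- norm of terms
  have hnorm : ∀ (z : ℝ), 0 ≤ z → ∀ j : ℕ,
      ‖(d (j + 1) : ℂ) * (fhat (j + 1) - 1) * ((z : ℝ) : ℂ) ^ (j + 1) / ((j : ℂ) + 1)‖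
        = d (j + 1) * g j * z ^ (j + 1) / ((j : ℝ) + 1) := by
    intro z hz j
    have hcast : ((j : ℂ) + 1) = (((j : ℝ) + 1 : ℝ) : ℂ) := by push_cast; ring
    rw [hcast]
    simp only [norm_div, norm_mul, norm_pow, Complex.norm_real, Real.norm_eq_abs]
    rw [abs_of_nonneg hz, abs_of_nonneg (ht j).le, abs_of_nonneg (hd (j+1) (by omega)).1.le]
  -- summability of the two complex series
  have hsummZ : ∀ (z : ℝ), 0 ≤ z → z < 1 → Summable (fun j : ℕ =>
      (d (j + 1) : ℂ) * (fhat (j + 1) - 1) * ((z : ℝ) : ℂ) ^ (j + 1) / ((j : ℂ) + 1)) := by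
    intro z hz hz1
    apply Summable.of_norm
    have hgeos : Summable (fun j : ℕ => dp * 2 * z ^ (j + 1)) := by
      have hgeo : Summable (fun j : ℕ => z ^ j) := summable_geometric_of_lt_one hz hz1
      have : Summable (fun j : ℕ => z ^ (j + 1)) := by
        simpa [pow_succ] using hgeo.mul_right z
      exact this.mul_left _
    refine Summable.of_nonneg_of_le (fun j => norm_nonneg _) (fun j => ?_) hgeos
    · rw [hnorm z hz j]
      have h1 : d (j + 1) * g j * z ^ (j + 1) / ((j : ℝ) + 1) ≤ d (j + 1) * g j * z ^ (j + 1) := by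
        apply div_le_self (mul_nonneg (mul_nonneg (hd (j+1) (by omega)).1.le (hg0 j))
          (pow_nonneg hz _)) (by linarith [ht j])
      have h2 : d (j + 1) * g j * z ^ (j + 1) ≤ dp * 2 * z ^ (j + 1) := by
        apply mul_le_mul_of_nonneg_right _ (pow_nonneg hz _)
        exact mul_le_mul (hd (j+1) (by omega)).2 (hg2 j) (hg0 j) hdp0
      linarith
  have hu := hsummZ x hx0 hx1
  have hv := hsummZ y hy0 hy1
  -- rewrite difference of tsums
  rw [← Summable.tsum_sub hu hv]
  have hdiff : ∀ j : ℕ,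
      ((d (j + 1) : ℂ) * (fhat (j + 1) - 1) * ((x : ℝ) : ℂ) ^ (j + 1) / ((j : ℂ) + 1)
        - (d (j + 1) : ℂ) * (fhat (j + 1) - 1) * ((y : ℝ) : ℂ) ^ (j + 1) / ((j : ℂ) + 1))
      = (d (j + 1) : ℂ) * (fhat (j + 1) - 1) * ((w j : ℝ) : ℂ) / ((j : ℂ) + 1) := by
    intro j
    have : ((w j : ℝ) : ℂ) = ((x : ℝ) : ℂ) ^ (j + 1) - ((y : ℝ) : ℂ) ^ (j + 1) := by
      simp only [hw]; push_cast; ring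
    rw [this]; ring
  have hdnorm : ∀ j : ℕ,
      ‖(d (j + 1) : ℂ) * (fhat (j + 1) - 1) * ((x : ℝ) : ℂ) ^ (j + 1) / ((j : ℂ) + 1)
        - (d (j + 1) : ℂ) * (fhat (j + 1) - 1) * ((y : ℝ) : ℂ) ^ (j + 1) / ((j : ℂ) + 1)‖
      = d (j + 1) * g j * w j / ((j : ℝ) + 1) := by
    intro j
    rw [hdiff j]
    have hcast : ((j : ℂ) + 1) = (((j : ℝ) + 1 : ℝ) : ℂ) := by push_cast; ring
    rw [hcast]
    simp only [norm_div, norm_mul, Complex.norm_real, Real.norm_eq_abs]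
    rw [abs_of_nonneg (hw0 j), abs_of_nonneg (ht j).le, abs_of_nonneg (hd (j+1) (by omega)).1.le]
  have hmaj : ∀ j : ℕ, d (j + 1) * g j * w j / ((j : ℝ) + 1) ≤ dp * (g j * w j / ((j : ℝ) + 1)) := by
    intro j
    have h1 : d (j + 1) * g j * w j ≤ dp * g j * w j :=
      mul_le_mul_of_nonneg_right
        (mul_le_mul_of_nonneg_right (hd (j+1) (by omega)).2 (hg0 j)) (hw0 j)
    calc d (j + 1) * g j * w j / ((j : ℝ) + 1) ≤ dp * g j * w j / ((j : ℝ) + 1) :=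
          div_le_div_of_nonneg_right h1 (ht j).le
      _ = dp * (g j * w j / ((j : ℝ) + 1)) := by ring
  have hsnorm : Summable (fun j : ℕ =>
      ‖(d (j + 1) : ℂ) * (fhat (j + 1) - 1) * ((x : ℝ) : ℂ) ^ (j + 1) / ((j : ℂ) + 1)
        - (d (j + 1) : ℂ) * (fhat (j + 1) - 1) * ((y : ℝ) : ℂ) ^ (j + 1) / ((j : ℂ) + 1)‖) := by
    apply Summable.of_nonneg_of_le (fun j => norm_nonneg _) (fun j => ?_) (hA.mul_left dp)
    rw [hdnorm j]; exact hmaj j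
  calc ‖∑' j : ℕ, ((d (j + 1) : ℂ) * (fhat (j + 1) - 1) * ((x : ℝ) : ℂ) ^ (j + 1) / ((j : ℂ) + 1)
        - (d (j + 1) : ℂ) * (fhat (j + 1) - 1) * ((y : ℝ) : ℂ) ^ (j + 1) / ((j : ℂ) + 1))‖
      ≤ ∑' j : ℕ, ‖(d (j + 1) : ℂ) * (fhat (j + 1) - 1) * ((x : ℝ) : ℂ) ^ (j + 1) / ((j : ℂ) + 1)
        - (d (j + 1) : ℂ) * (fhat (j + 1) - 1) * ((y : ℝ) : ℂ) ^ (j + 1) / ((j : ℂ) + 1)‖ :=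
        norm_tsum_le_tsum_norm hsnorm
    _ ≤ ∑' j : ℕ, dp * (g j * w j / ((j : ℝ) + 1)) := by
        apply Summable.tsum_le_tsum (fun j => ?_) hsnorm (hA.mul_left dp)
        rw [hdnorm j]; exact hmaj j
    _ = dp * ∑' j : ℕ, g j * w j / ((j : ℝ) + 1) := tsum_mul_left
    _ ≤ dp * ((∑' j : ℕ, g j ^ P / ((j : ℝ) + 1)) ^ (1 / P) * T) :=
        mul_le_mul_of_nonneg_left hAle hdp0
    _ = dp * (∑' j : ℕ, ‖fhat (j + 1) - 1‖ ^ P / ((j : ℝ) + 1)) ^ (1 / P) * T := by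
        rw [hg, mul_assoc]

lemma aux_log_bound (n : ℕ) (hn : 1 ≤ n) :
    -Real.log (1 - Real.exp (-1 / (n : ℝ))) ≤ 1 + Real.log n := by
  have hn0 : (0:ℝ) < n := by exact_mod_cast hn
  set t : ℝ := 1 / n with htdef
  have ht0 : 0 < t := by positivity
  have ht1 : t ≤ 1 := by rw [htdef, div_le_one hn0]; exact_mod_cast hn
  have h1 : t + 1 ≤ Real.exp t := Real.add_one_le_exp t
  have key : t * Real.exp (-1) ≤ 1 - Real.exp (-t) := by
    have h2 : (t + 1) * Real.exp (-t) ≤ 1 := by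
      have := mul_le_mul_of_nonneg_right h1 (Real.exp_pos (-t)).le
      rwa [← Real.exp_add, add_neg_cancel, Real.exp_zero] at this
    have h3 : Real.exp (-1) ≤ Real.exp (-t) := Real.exp_le_exp.2 (by linarith)
    nlinarith [Real.exp_pos (-t)]
  have hneg : -1 / (n:ℝ) = -t := by rw [htdef]; ring
  rw [hneg]
  have hlog : Real.log (t * Real.exp (-1)) ≤ Real.log (1 - Real.exp (-t)) :=
    Real.log_le_log (by positivity) key
  have heq : Real.log (t * Real.exp (-1)) = -(1 + Real.log n) := by
    rw [Real.log_mul (by positivity) (Real.exp_ne_zero _), Real.log_exp, htdef,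
      Real.log_div one_ne_zero (ne_of_gt hn0), Real.log_one]
    ring
  linarith

lemma aux_log_upper (m : ℕ) (hm : 1 ≤ m) :
    Real.log (1 - Real.exp (-1 / (m : ℝ))) ≤ -Real.log m := by
  have hm0 : (0:ℝ) < m := by exact_mod_cast hm
  have h1 : 1 - 1/(m:ℝ) ≤ Real.exp (-(1/(m:ℝ))) := by
    have := Real.add_one_le_exp (-(1/(m:ℝ))); linarith
  have h2 : 1 - Real.exp (-1/(m:ℝ)) ≤ 1/(m:ℝ) := by
    have hneg : -1/(m:ℝ) = -(1/(m:ℝ)) := by ring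
    rw [hneg]; linarith
  have hpos : 0 < 1 - Real.exp (-1/(m:ℝ)) := by
    have : Real.exp (-1/(m:ℝ)) < 1 :=
      Real.exp_lt_one_iff.2 (div_neg_of_neg_of_pos (by norm_num) hm0)
    linarith
  calc Real.log (1 - Real.exp (-1 / (m:ℝ))) ≤ Real.log (1/(m:ℝ)) := Real.log_le_log hpos h2
    _ = -Real.log m := by rw [Real.log_div one_ne_zero (ne_of_gt hm0), Real.log_one]; ring

/-- Lipschitz-type bounds for `L(x) = ∑_j d_j (f̂(j)−1) x^j / j`:
`|L(e^{-1/n}) − L(e^{-1/m})| ≤ d⁺ ρ(p)(1 + |log(n/m)|)` and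
`|L(e^{-1/n})| ≤ d⁺ ρ(p)(1 + log n)`, where `ρ(p) = (∑_j |f̂(j)−1|^p / j)^{1/p}`. -/
theorem stmt_16 (d : ℕ → ℝ) (dp : ℝ)
    (hd : ∀ j : ℕ, 1 ≤ j → 0 < d j ∧ d j ≤ dp)
    (fhat : ℕ → ℂ) (hf : ∀ j, ‖fhat j‖ ≤ 1)
    (P : ℝ) (hP : 1 < P)
    (hsum : Summable (fun j : ℕ => ‖fhat (j + 1) - 1‖ ^ P / ((j : ℝ) + 1))) :
    ∀ n m : ℕ, 1 ≤ n → 1 ≤ m →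
      ‖(∑' j : ℕ, (d (j + 1) : ℂ) * (fhat (j + 1) - 1) *
            ((Real.exp (-1 / (n : ℝ)) : ℝ) : ℂ) ^ (j + 1) / ((j : ℂ) + 1))
        - (∑' j : ℕ, (d (j + 1) : ℂ) * (fhat (j + 1) - 1) *
            ((Real.exp (-1 / (m : ℝ)) : ℝ) : ℂ) ^ (j + 1) / ((j : ℂ) + 1))‖
        ≤ dp * (∑' j : ℕ, ‖fhat (j + 1) - 1‖ ^ P / ((j : ℝ) + 1)) ^ (1 / P) *
            (1 + |Real.log ((n : ℝ) / (m : ℝ))|) ∧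
      ‖∑' j : ℕ, (d (j + 1) : ℂ) * (fhat (j + 1) - 1) *
            ((Real.exp (-1 / (n : ℝ)) : ℝ) : ℂ) ^ (j + 1) / ((j : ℂ) + 1)‖
        ≤ dp * (∑' j : ℕ, ‖fhat (j + 1) - 1‖ ^ P / ((j : ℝ) + 1)) ^ (1 / P) *
            (1 + Real.log (n : ℝ)) := by
  have hdiffkey : ∀ n m : ℕ, 1 ≤ n → 1 ≤ m → m ≤ n →
      ‖(∑' j : ℕ, (d (j + 1) : ℂ) * (fhat (j + 1) - 1) *
            ((Real.exp (-1 / (n : ℝ)) : ℝ) : ℂ) ^ (j + 1) / ((j : ℂ) + 1))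
        - (∑' j : ℕ, (d (j + 1) : ℂ) * (fhat (j + 1) - 1) *
            ((Real.exp (-1 / (m : ℝ)) : ℝ) : ℂ) ^ (j + 1) / ((j : ℂ) + 1))‖
        ≤ dp * (∑' j : ℕ, ‖fhat (j + 1) - 1‖ ^ P / ((j : ℝ) + 1)) ^ (1 / P) *
            (1 + |Real.log ((n : ℝ) / (m : ℝ))|) := by
    intro n m hn hm hmn
    have hn0 : (0:ℝ) < n := by exact_mod_cast hn
    have hm0 : (0:ℝ) < m := by exact_mod_cast hm
    apply aux_main d dp hd fhat hf P hP hsum _ _ (Real.exp_nonneg _)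
      (Real.exp_le_exp.2 ?hmono) (Real.exp_lt_one_iff.2 (div_neg_of_neg_of_pos (by norm_num) hn0))
      _ (le_add_of_nonneg_right (abs_nonneg _)) ?hT
    case hmono =>
      rw [neg_div, neg_div, neg_le_neg_iff]
      exact one_div_le_one_div_of_le hm0 (by exact_mod_cast hmn)
    case hT =>
      have h1 := aux_log_upper m hm
      have h2 := aux_log_bound n hn
      have h3 : Real.log ((n:ℝ)/(m:ℝ)) = Real.log n - Real.log m :=
        Real.log_div (ne_of_gt hn0) (ne_of_gt hm0)
      have h4 : Real.log ((n:ℝ)/(m:ℝ)) ≤ |Real.log ((n:ℝ)/(m:ℝ))| := le_abs_self _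
      linarith
  intro n m hn hm
  have hn0 : (0:ℝ) < n := by exact_mod_cast hn
  have hm0 : (0:ℝ) < m := by exact_mod_cast hm
  constructor
  · rcases le_total m n with h | h
    · exact hdiffkey n m hn hm h
    · have habs : |Real.log ((n:ℝ)/(m:ℝ))| = |Real.log ((m:ℝ)/(n:ℝ))| := by
        rw [Real.log_div (ne_of_gt hn0) (ne_of_gt hm0),
          Real.log_div (ne_of_gt hm0) (ne_of_gt hn0), abs_sub_comm]
      rw [norm_sub_rev, habs]
      exact hdiffkey m n hm hn h
  · have h0 : (∑' j : ℕ, (d (j + 1) : ℂ) * (fhat (j + 1) - 1) *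
        (((0:ℝ)) : ℂ) ^ (j + 1) / ((j : ℂ) + 1)) = 0 := by
      simp
    have hT : Real.log (1 - 0) - Real.log (1 - Real.exp (-1 / (n:ℝ))) ≤ 1 + Real.log n := by
      have := aux_log_bound n hn
      rw [sub_zero, Real.log_one]
      linarith
    have := aux_main d dp hd fhat hf P hP hsum (Real.exp (-1/(n:ℝ))) 0 le_rfl
      (Real.exp_nonneg _) (Real.exp_lt_one_iff.2 (div_neg_of_neg_of_pos (by norm_num) hn0))
      (1 + Real.log n) (le_add_of_nonneg_right (Real.log_nonneg (by exact_mod_cast hn))) hT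
    rw [h0, sub_zero] at this
    exact this
end
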